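/- arXiv:1605.06789 — 4 statements merged into one kernel-verified Lean document; each statement's English description precedes it below -/
import Mathlib

section
/- Let k be a field, A an abelian group, K a subgroup of A such that every element of A has a positive integer multiple lying in K (i.e. A/K is torsion). Let R be a commutative A-graded k-algebra that is finitely generated as a k-algebra, and let R_K = ⊕_{a∈K} R_a be the Veronese subalgebra of R consisting of the homogeneous pieces with degree in K. Then R is a finitely generated R_K-module, and R_K is a finitely generated k-algebra. -/
/-- Let `k` be a field, `A` an abelian group, `K ≤ A` with `A/K` torsion
(every element of `A` has a positive multiple in `K`), and `R` a commutative `A`-graded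
`k`-algebra, finitely generated as a `k`-algebra.  Let `R_K` be the Veronese subalgebra
`⊕_{a ∈ K} R_a` (equivalently, the subalgebra generated by the homogeneous pieces of
degree in `K`).  Then `R` is a finitely generated `R_K`-module and `R_K` is a finitely
generated `k`-algebra. -/
theorem stmt0 {k : Type*} [Field k] {A : Type*} [AddCommGroup A] [DecidableEq A]
    {R : Type*} [CommRing R] [Algebra k R]
    (𝒜 : A → Submodule k R) [GradedAlgebra 𝒜]
    (K : AddSubgroup A)
    (htor : ∀ a : A, ∃ m : ℕ, 0 < m ∧ m • a ∈ K)
    (hfg : Algebra.FiniteType k R)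
    (RK : Subalgebra k R)
    (hRK : RK = Algebra.adjoin k (⋃ a ∈ (K : Set A), ((𝒜 a : Submodule k R) : Set R))) :
    Module.Finite RK R ∧ Algebra.FiniteType k RK := by
  classical
  -- a finite homogeneous generating set
  obtain ⟨S, hS⟩ := hfg.out
  set T : Finset R := S.biUnion fun s =>
    (DirectSum.decompose 𝒜 s).support.image fun a => (DirectSum.decompose 𝒜 s a : R) with hTdef
  have hhom : ∀ t ∈ T, ∃ a : A, t ∈ 𝒜 a := by
    intro t ht
    simp only [hTdef, Finset.mem_biUnion, Finset.mem_image] at ht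
    obtain ⟨s, -, a, -, rfl⟩ := ht
    exact ⟨a, (DirectSum.decompose 𝒜 s a).2⟩
  have hT : Algebra.adjoin k (T : Set R) = ⊤ := by
    rw [eq_top_iff, ← hS]
    apply Algebra.adjoin_le
    intro s hs
    rw [← DirectSum.sum_support_decompose 𝒜 s]
    refine Subalgebra.sum_mem _ fun a ha => Algebra.subset_adjoin ?_
    simp only [hTdef, Finset.coe_biUnion, Set.mem_iUnion, Finset.mem_coe, Finset.coe_image,
      Set.mem_image]
    exact ⟨s, hs, a, ha, rfl⟩
  -- degrees and multipliers
  choose d hd using fun t : T => hhom t t.2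
  choose m hm hmK using fun t : T => htor (d t)
  have hpow : ∀ t : T, (t : R) ^ m t ∈ RK := by
    intro t
    rw [hRK]
    refine Algebra.subset_adjoin ?_
    refine Set.mem_iUnion₂.mpr ⟨m t • d t, hmK t, ?_⟩
    exact SetLike.pow_mem_graded _ (hd t)
  -- monomials
  set mon : (T → ℕ) → R := fun e => ∏ t : T, (t : R) ^ e t with hmon
  have hmul : ∀ e f, mon e * mon f = mon (e + f) := by
    intro e f
    simp only [hmon, ← Finset.prod_mul_distrib, ← pow_add, Pi.add_apply]
  set M : Set R := Set.range fun e : ∀ t : T, Fin (m t) => mon fun t => (e t : ℕ) with hM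
  set N : Submodule RK R := Submodule.span RK M with hN
  have hsmul : ∀ (c : RK) (x : R), c • x = (c : R) * x := fun c x => rfl
  have key : ∀ e : T → ℕ, mon e ∈ N := by
    intro e
    have hsplit : mon e = (∏ t : T, ((t : R) ^ m t) ^ (e t / m t)) * mon fun t => e t % m t := by
      rw [hmon]
      simp only [← Finset.prod_mul_distrib, ← pow_mul, ← pow_add]
      exact Finset.prod_congr rfl fun t _ => by rw [Nat.div_add_mod]
    have hc : (∏ t : T, ((t : R) ^ m t) ^ (e t / m t)) ∈ RK :=
      Subalgebra.prod_mem _ fun t _ => Subalgebra.pow_mem _ (hpow t) _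
    have hmem : (mon fun t => e t % m t) ∈ M :=
      ⟨fun t => ⟨e t % m t, Nat.mod_lt _ (hm t)⟩, rfl⟩
    rw [hsplit, ← hsmul ⟨_, hc⟩]
    exact N.smul_mem _ (Submodule.subset_span hmem)
  have hNmul : ∀ x ∈ N, ∀ y ∈ N, x * y ∈ N := by
    intro x hx y hy
    have : N * N ≤ N := by
      rw [hN, Submodule.span_mul_span, Submodule.span_le]
      rintro _ ⟨_, ⟨e, rfl⟩, _, ⟨f, rfl⟩, rfl⟩
      simp only [SetLike.mem_coe]
      rw [hmul]
      exact key _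
    exact this (Submodule.mul_mem_mul hx hy)
  have hNtop : N = ⊤ := by
    rw [eq_top_iff]
    intro x hxt
    clear hxt
    have hx : x ∈ Algebra.adjoin k (T : Set R) := hT ▸ Algebra.mem_top
    induction hx using Algebra.adjoin_induction with
    | mem t ht =>
        have : t = mon fun s => if s = (⟨t, ht⟩ : T) then 1 else 0 := by
          rw [hmon]
          dsimp only
          rw [Finset.prod_eq_single (⟨t, ht⟩ : T)]
          · simp
          · intro s _ hs; simp [hs]
          · simp
        rw [this]; exact key _
    | algebraMap r =>
        have h1 : (1 : R) ∈ N := by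
          have : (1 : R) = mon 0 := by simp [hmon]
          rw [this]; exact key _
        have : algebraMap k R r = (algebraMap k RK r : R) * 1 := by
          rw [mul_one]; rfl
        rw [this, ← hsmul]
        exact N.smul_mem _ h1
    | add x y _ _ hx hy => exact N.add_mem hx hy
    | mul x y _ _ hx hy => exact hNmul _ hx _ hy
  have hMfin : M.Finite := Set.finite_range _
  have hfgmod : (⊤ : Submodule RK R).FG :=
    Submodule.fg_def.mpr ⟨M, hMfin, hNtop⟩
  have hfin : Module.Finite RK R := ⟨hfgmod⟩
  refine ⟨hfin, ⟨?_⟩⟩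
  exact fg_of_fg_of_fg k RK R hfg.out hfgmod Subtype.val_injective
end

section
/- Let k be a field, A an abelian group, K a subgroup of A, and R a commutative A-graded k-algebra generated as a k-algebra by homogeneous elements r_1, …, r_l. Suppose for each i there is a positive integer b_i such that b_i · deg(r_i) ∈ K. Then R is generated as a module over R_K = ⊕_{a∈K} R_a by the finitely many monomials r_1^{j_1} ⋯ r_l^{j_l} with 0 ≤ j_i < b_i for all i. -/
/-- Let `k` be a field, `A` an abelian group, `K ≤ A` a subgroup, and `R` a
commutative `A`-graded `k`-algebra generated as a `k`-algebra by homogeneous elements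
`r 1, …, r l` of degrees `deg 1, …, deg l`.  If for each `i` there is `b i > 0` with
`b i • deg i ∈ K`, then `R` is generated as a module over the Veronese subalgebra
`R_K = ⊕_{a ∈ K} R_a` by the monomials `∏ i, r i ^ j i` with `j i < b i` for all `i`. -/
theorem stmt1 {k : Type*} [Field k] {A : Type*} [AddCommGroup A] [DecidableEq A]
    {R : Type*} [CommRing R] [Algebra k R]
    (𝒜 : A → Submodule k R) [GradedAlgebra 𝒜]
    (K : AddSubgroup A)
    {l : ℕ} (r : Fin l → R) (deg : Fin l → A)
    (hhom : ∀ i, r i ∈ 𝒜 (deg i))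
    (hgen : Algebra.adjoin k (Set.range r) = ⊤)
    (b : Fin l → ℕ) (hb : ∀ i, 0 < b i) (hbK : ∀ i, (b i) • (deg i) ∈ K)
    (RK : Subalgebra k R)
    (hRK : RK = Algebra.adjoin k (⋃ a ∈ (K : Set A), ((𝒜 a : Submodule k R) : Set R))) :
    Submodule.span RK
        {x : R | ∃ j : Fin l → ℕ, (∀ i, j i < b i) ∧ x = ∏ i, r i ^ j i} = ⊤ := by
  set S : Set R := {x : R | ∃ j : Fin l → ℕ, (∀ i, j i < b i) ∧ x = ∏ i, r i ^ j i} with hS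
  set M := Submodule.span RK S with hM
  have hpow : ∀ i, r i ^ b i ∈ RK := by
    intro i
    have h1 : r i ^ b i ∈ 𝒜 (b i • deg i) := SetLike.pow_mem_graded _ (hhom i)
    rw [hRK]
    exact Algebra.subset_adjoin (Set.mem_biUnion (hbK i) h1)
  have hmono : ∀ j : Fin l → ℕ, (∏ i, r i ^ j i) ∈ M := by
    intro j
    have hc : (∏ i, (r i ^ b i) ^ (j i / b i)) ∈ RK :=
      Subalgebra.prod_mem RK fun i _ => pow_mem (hpow i) _
    have hsS : (∏ i, r i ^ (j i % b i)) ∈ S :=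
      ⟨fun i => j i % b i, fun i => Nat.mod_lt _ (hb i), rfl⟩
    have key : (∏ i, r i ^ j i)
        = (⟨_, hc⟩ : RK) • (∏ i, r i ^ (j i % b i)) := by
      have : (∏ i, r i ^ j i)
          = (∏ i, (r i ^ b i) ^ (j i / b i)) * (∏ i, r i ^ (j i % b i)) := by
        rw [← Finset.prod_mul_distrib]
        refine Finset.prod_congr rfl fun i _ => ?_
        rw [← pow_mul, ← pow_add, Nat.div_add_mod]
      rw [this]; rfl
    rw [key]
    exact Submodule.smul_mem _ _ (Submodule.subset_span hsS)
  -- M is closed under multiplication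
  have hmul : ∀ x ∈ M, ∀ y ∈ M, x * y ∈ M := by
    intro x hx
    refine Submodule.span_induction (fun g hg => ?_) (fun y _ => by simp [M]) ?_ ?_ hx
    · -- g a generator
      intro y hy
      refine Submodule.span_induction (fun g' hg' => ?_) (by simp [M]) ?_ ?_ hy
      · obtain ⟨j, _, rfl⟩ := hg
        obtain ⟨j', _, rfl⟩ := hg'
        have : (∏ i, r i ^ j i) * (∏ i, r i ^ j' i) = ∏ i, r i ^ (j i + j' i) := by
          rw [← Finset.prod_mul_distrib]
          exact Finset.prod_congr rfl fun i _ => (pow_add _ _ _).symm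
        rw [this]; exact hmono _
      · intro a c _ _ ha hc
        rw [mul_add]; exact add_mem ha hc
      · intro c z _ hz
        rw [mul_smul_comm]; exact Submodule.smul_mem _ _ hz
    · intro a c _ _ ha hc
      intro y hy
      rw [add_mul]; exact add_mem (ha y hy) (hc y hy)
    · intro c z _ hz y hy
      rw [smul_mul_assoc]; exact Submodule.smul_mem _ _ (hz y hy)
  have hone : (1 : R) ∈ M := by
    have := hmono (fun _ => 0)
    simpa using this
  rw [eq_top_iff]
  intro x _
  have hx : x ∈ Algebra.adjoin k (Set.range r) := hgen ▸ Algebra.mem_top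
  refine Algebra.adjoin_induction (fun g hg => ?_) (fun c => ?_) (fun a c _ _ ha hc => add_mem ha hc) (fun a c _ _ ha hc => hmul a ha c hc) hx
  · obtain ⟨i, rfl⟩ := hg
    have := hmono (Pi.single i 1)
    have heq : (∏ j, r j ^ (Pi.single i 1 : Fin l → ℕ) j) = r i := by
      rw [Finset.prod_eq_single i (fun j _ hj => by simp [Pi.single_eq_of_ne hj])
        (by simp)]
      simp
    rwa [heq] at this
  · have hc : algebraMap k R c ∈ RK := RK.algebraMap_mem c
    have : algebraMap k R c = (⟨_, hc⟩ : RK) • (1 : R) := by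
      simp [Subalgebra.smul_def, Algebra.smul_def]
    rw [this]
    exact Submodule.smul_mem _ _ hone
end

section
/- Let R be an integral domain graded by an abelian group A which is A-factorial, let s ∈ R be a homogeneous element of degree d that is nonzero and non-invertible, and let n ≥ 2 be an integer. Set A' = (A ⊕ ℤ)/⟨(d, −n)⟩ and R' = R[z]/(z^n − s), graded by A' so that elements of R keep (the image of) their A-degrees and z is homogeneous of degree the class of (0,1). Then R' is A'-factorial if and only if s is A-irreducible. -/
/-- A nonzero, non-invertible homogeneous element is `A`-irreducible (h-irreducible) if
whenever it is written as a product of two homogeneous elements, one of them is a unit. -/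
def HIrreducible {A R : Type*} [CommRing R] (𝒜 : A → AddSubgroup R) (a : R) : Prop :=
  a ≠ 0 ∧ ¬IsUnit a ∧ SetLike.IsHomogeneousElem 𝒜 a ∧
    ∀ b c : R, SetLike.IsHomogeneousElem 𝒜 b → SetLike.IsHomogeneousElem 𝒜 c →
      a = b * c → IsUnit b ∨ IsUnit c

/-- Two elements are associated up to an invertible homogeneous element. -/
def HAssociated {A R : Type*} [CommRing R] (𝒜 : A → AddSubgroup R) (a b : R) : Prop :=
  ∃ u : R, IsUnit u ∧ SetLike.IsHomogeneousElem 𝒜 u ∧ b = u * a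

/-- `R` is graded factorial (`A`-factorial): every nonzero non-invertible homogeneous
element has a factorisation into h-irreducible elements, and any two such factorisations
agree up to reordering and multiplication with invertible homogeneous elements. -/
def GradedFactorial {A R : Type*} [CommRing R] (𝒜 : A → AddSubgroup R) : Prop :=
  (∀ a : R, a ≠ 0 → ¬IsUnit a → SetLike.IsHomogeneousElem 𝒜 a →
      ∃ f : Multiset R, (∀ b ∈ f, HIrreducible 𝒜 b) ∧ f.prod = a) ∧
  ∀ f g : Multiset R, (∀ b ∈ f, HIrreducible 𝒜 b) → (∀ b ∈ g, HIrreducible 𝒜 b) →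
      f.prod = g.prod → Multiset.Rel (HAssociated 𝒜) f g

/-- The grading of `R' = R[z]/(z^n - s)` by `A' = (A ⊕ ℤ)/⟨(d, -n)⟩`: the homogeneous
piece of degree `[(a, i)]` with `0 ≤ i < n` is `R_a · z^i`, where `z` is the root. -/
noncomputable def rootGrading {A R : Type*} [AddCommGroup A] [CommRing R]
    (𝒜 : A → AddSubgroup R) (d : A) (s : R) (n : ℕ)
    (c : (A × ℤ) ⧸ AddSubgroup.zmultiples (d, -(n : ℤ))) :
    AddSubgroup (AdjoinRoot (Polynomial.X ^ n - Polynomial.C s)) :=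
  AddSubgroup.closure {x | ∃ (a : A) (i : ℕ), i < n ∧
    (QuotientAddGroup.mk (a, (i : ℤ)) :
        (A × ℤ) ⧸ AddSubgroup.zmultiples (d, -(n : ℤ))) = c ∧
    ∃ r ∈ 𝒜 a, x = AdjoinRoot.of (Polynomial.X ^ n - Polynomial.C s) r *
      AdjoinRoot.root (Polynomial.X ^ n - Polynomial.C s) ^ i}


open Polynomial AdjoinRoot

section Base
variable {R : Type*} [CommRing R] [Nontrivial R] (s : R) (n : ℕ) (hn0 : 0 < n)
include hn0

noncomputable def rootBasis : Module.Basis (Fin n) R (AdjoinRoot (X ^ n - C s)) :=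
  (AdjoinRoot.powerBasisAux' (monic_X_pow_sub_C s hn0.ne')).reindex
    (finCongr (by rw [natDegree_X_pow_sub_C]))

lemma rootBasis_eq_pow (i : Fin n) :
    rootBasis s n hn0 i = root (X ^ n - C s) ^ (i : ℕ) := by
  rw [rootBasis, Module.Basis.reindex_apply]
  have := (AdjoinRoot.powerBasis' (monic_X_pow_sub_C s hn0.ne')).basis_eq_pow
    ((finCongr (by rw [natDegree_X_pow_sub_C] : (X ^ n - C s).natDegree = n)).symm i)
  exact this

lemma of_mul_pow_eq_smul (r : R) (i : Fin n) :
    of (X ^ n - C s) r * root (X ^ n - C s) ^ (i : ℕ) = r • rootBasis s n hn0 i := by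
  rw [rootBasis_eq_pow, Algebra.smul_def, AdjoinRoot.algebraMap_eq]

lemma repr_of_mul_pow (r : R) (i : Fin n) :
    (rootBasis s n hn0).repr (of (X ^ n - C s) r * root (X ^ n - C s) ^ (i : ℕ))
      = Finsupp.single i r := by
  rw [of_mul_pow_eq_smul s n hn0, map_smul, Module.Basis.repr_self, Finsupp.smul_single, smul_eq_mul, mul_one]

lemma coeff_unique {r r' : R} {i j : ℕ} (hi : i < n) (hj : j < n)
    (h : of (X ^ n - C s) r * root (X ^ n - C s) ^ i
        = of (X ^ n - C s) r' * root (X ^ n - C s) ^ j) :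
    (r = 0 ∧ r' = 0) ∨ (i = j ∧ r = r') := by
  have h2 := congrArg (rootBasis s n hn0).repr
    (show of (X ^ n - C s) r * root (X ^ n - C s) ^ ((⟨i, hi⟩ : Fin n) : ℕ)
        = of (X ^ n - C s) r' * root (X ^ n - C s) ^ ((⟨j, hj⟩ : Fin n) : ℕ) from h)
  rw [repr_of_mul_pow, repr_of_mul_pow] at h2
  rcases (Finsupp.single_eq_single_iff _ _ _ _).1 h2 with ⟨hij, hr⟩ | ⟨h1, h2⟩
  · exact Or.inr ⟨congrArg Fin.val hij, hr⟩
  · exact Or.inl ⟨h1, h2⟩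

lemma of_mul_pow_ne_zero {r : R} (hr : r ≠ 0) {i : ℕ} (hi : i < n) :
    of (X ^ n - C s) r * root (X ^ n - C s) ^ i ≠ 0 := by
  intro h
  have h2 := congrArg (rootBasis s n hn0).repr
    (show of (X ^ n - C s) r * root (X ^ n - C s) ^ ((⟨i, hi⟩ : Fin n) : ℕ) = 0 from h)
  rw [repr_of_mul_pow, map_zero] at h2
  exact hr (Finsupp.single_eq_zero.1 h2)

lemma of_injective' {r r' : R} (h : of (X ^ n - C s) r = of (X ^ n - C s) r') : r = r' := by
  have : of (X ^ n - C s) r * root (X ^ n - C s) ^ 0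
      = of (X ^ n - C s) r' * root (X ^ n - C s) ^ 0 := by simpa using h
  rcases coeff_unique s n hn0 hn0 hn0 this with ⟨ha, hb⟩ | ⟨_, hb⟩
  · rw [ha, hb]
  · exact hb

lemma isUnit_of_iff {r : R} (h : IsUnit (of (X ^ n - C s) r)) : IsUnit r := by
  rcases h.exists_right_inv with ⟨x, hx⟩
  have h1 : (1 : AdjoinRoot (X ^ n - C s)) = rootBasis s n hn0 ⟨0, hn0⟩ := by
    rw [rootBasis_eq_pow]; simp
  have : r • x = 1 := by rw [Algebra.smul_def, AdjoinRoot.algebraMap_eq]; exact hx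
  have h2 := congrArg (fun y => (rootBasis s n hn0).repr y ⟨0, hn0⟩) this
  simp only [map_smul, Finsupp.smul_apply, smul_eq_mul] at h2
  rw [h1, Module.Basis.repr_self] at h2
  simp only [Finsupp.single_eq_same] at h2
  exact IsUnit.of_mul_eq_one (a := _) _ h2

omit hn0 [Nontrivial R] in
lemma root_pow_n : root (X ^ n - C s) ^ n = of (X ^ n - C s) s := by
  have : (mk (X ^ n - C s)) (X ^ n - C s) = 0 := AdjoinRoot.mk_self
  rw [map_sub, map_pow, AdjoinRoot.mk_X, sub_eq_zero] at this
  rw [this]; rfl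

end Base

section Mul
variable {R : Type*} [CommRing R] (s : R) (n : ℕ)

lemma root_pow_n' : root (X ^ n - C s) ^ n = of (X ^ n - C s) s := by
  have h : (mk (X ^ n - C s)) (X ^ n - C s) = 0 := AdjoinRoot.mk_self
  rw [map_sub, map_pow, AdjoinRoot.mk_X, sub_eq_zero] at h
  rw [h]; rfl

lemma mul_form_lt (r r' : R) (i j : ℕ) :
    (of (X ^ n - C s) r * root (X ^ n - C s) ^ i) *
      (of (X ^ n - C s) r' * root (X ^ n - C s) ^ j)
      = of (X ^ n - C s) (r * r') * root (X ^ n - C s) ^ (i + j) := by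
  rw [map_mul, pow_add]; ring

lemma mul_form_ge (r r' : R) {i j : ℕ} (h : n ≤ i + j) :
    (of (X ^ n - C s) r * root (X ^ n - C s) ^ i) *
      (of (X ^ n - C s) r' * root (X ^ n - C s) ^ j)
      = of (X ^ n - C s) (r * r' * s) * root (X ^ n - C s) ^ (i + j - n) := by
  rw [mul_form_lt]
  have h2 : root (X ^ n - C s) ^ (i + j) = of (X ^ n - C s) s * root (X ^ n - C s) ^ (i + j - n) := by
    rw [← root_pow_n', ← pow_add]
    congr 1
    omega
  rw [h2]; simp only [map_mul]; ring

end Mul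

section Grading
variable {A : Type*} [AddCommGroup A] {R : Type*} [CommRing R]
  (𝒜 : A → AddSubgroup R) (d : A) (s : R) (n : ℕ)

lemma class_exists (hn0 : 0 < n) (c : (A × ℤ) ⧸ AddSubgroup.zmultiples (d, -(n : ℤ))) :
    ∃ (a : A) (i : ℕ), i < n ∧
      (QuotientAddGroup.mk (a, (i : ℤ)) :
        (A × ℤ) ⧸ AddSubgroup.zmultiples (d, -(n : ℤ))) = c := by
  obtain ⟨⟨a, m⟩, rfl⟩ := QuotientAddGroup.mk_surjective c
  have hnz : (0 : ℤ) < n := by exact_mod_cast hn0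
  have h1 : 0 ≤ m % n := Int.emod_nonneg m hnz.ne'
  have h2 : m % n < n := Int.emod_lt_of_pos m hnz
  refine ⟨a + (m / n) • d, (m % n).toNat, by omega, ?_⟩
  rw [QuotientAddGroup.eq]
  refine ⟨-(m / n), ?_⟩
  have : (((m % n).toNat : ℤ)) = m % n := Int.toNat_of_nonneg h1
  refine Prod.ext ?_ ?_
  · simp [neg_zsmul]
  · simp only [Prod.snd_add, Prod.snd_neg, smul_eq_mul, Prod.smul_snd]
    rw [this]
    have h3 := Int.mul_ediv_add_emod m n
    linarith

lemma class_unique {a a' : A} {i i' : ℕ} (hi : i < n) (hi' : i' < n)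
    (h : (QuotientAddGroup.mk (a, (i : ℤ)) :
        (A × ℤ) ⧸ AddSubgroup.zmultiples (d, -(n : ℤ))) = QuotientAddGroup.mk (a', (i' : ℤ))) :
    a = a' ∧ i = i' := by
  rw [QuotientAddGroup.eq] at h
  obtain ⟨k, hk⟩ := AddSubgroup.mem_zmultiples_iff.1 h
  have h2 := congrArg Prod.snd hk
  simp only [Prod.smul_snd, smul_eq_mul, Prod.snd_add, Prod.snd_neg] at h2
  have hk0 : k = 0 := by
    rcases lt_trichotomy k 0 with hlt | heq | hgt
    · exfalso
      nlinarith [mul_le_mul_of_nonneg_right (by linarith : k ≤ -1) (by positivity : (0:ℤ) ≤ n),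
        (by exact_mod_cast hi : (i:ℤ) < n), (by positivity : (0:ℤ) ≤ (i':ℤ))]
    · exact heq
    · exfalso
      nlinarith [mul_le_mul_of_nonneg_right (by linarith : 1 ≤ k) (by positivity : (0:ℤ) ≤ n),
        (by exact_mod_cast hi' : (i':ℤ) < n), (by positivity : (0:ℤ) ≤ (i:ℤ))]
  subst hk0
  rw [zero_smul] at hk
  have h3 := congrArg Prod.fst hk.symm
  have h4 := congrArg Prod.snd hk.symm
  simp only [Prod.fst_add, Prod.fst_neg, Prod.fst_zero, Prod.snd_add, Prod.snd_neg,
    Prod.snd_zero] at h3 h4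
  exact ⟨neg_add_eq_zero.1 h3, by omega⟩

lemma mem_rootGrading_iff (hn0 : 0 < n) {a : A} {i : ℕ} (hi : i < n)
    (x : AdjoinRoot (X ^ n - C s)) :
    x ∈ rootGrading 𝒜 d s n (QuotientAddGroup.mk (a, (i : ℤ))) ↔
      ∃ r ∈ 𝒜 a, x = of (X ^ n - C s) r * root (X ^ n - C s) ^ i := by
  constructor
  · intro hx
    let φ : R →+ AdjoinRoot (X ^ n - C s) :=
      (AddMonoidHom.mulRight (root (X ^ n - C s) ^ i)).comp
        (of (X ^ n - C s)).toAddMonoidHom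
    have hle : rootGrading 𝒜 d s n (QuotientAddGroup.mk (a, (i : ℤ))) ≤ (𝒜 a).map φ := by
      rw [rootGrading]
      apply AddSubgroup.closure_le _ |>.2
      rintro y ⟨a', i', hi', hc, r, hr, rfl⟩
      obtain ⟨rfl, rfl⟩ := class_unique d n hi' hi hc
      exact ⟨r, hr, rfl⟩
    obtain ⟨r, hr, hrx⟩ := hle hx
    exact ⟨r, hr, hrx.symm⟩
  · rintro ⟨r, hr, rfl⟩
    exact AddSubgroup.subset_closure ⟨a, i, hi, rfl, r, hr, rfl⟩

lemma homog_iff (hn0 : 0 < n) (x : AdjoinRoot (X ^ n - C s)) :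
    SetLike.IsHomogeneousElem (rootGrading 𝒜 d s n) x ↔
      ∃ (a : A) (i : ℕ) (r : R), i < n ∧ r ∈ 𝒜 a ∧
        x = of (X ^ n - C s) r * root (X ^ n - C s) ^ i := by
  constructor
  · rintro ⟨c, hc⟩
    obtain ⟨a, i, hi, rfl⟩ := class_exists d n hn0 c
    obtain ⟨r, hr, rfl⟩ := (mem_rootGrading_iff 𝒜 d s n hn0 hi _).1 hc
    exact ⟨a, i, r, hi, hr, rfl⟩
  · rintro ⟨a, i, r, hi, hr, rfl⟩
    exact ⟨_, (mem_rootGrading_iff 𝒜 d s n hn0 hi _).2 ⟨r, hr, rfl⟩⟩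

end Grading
section Generic
variable {B : Type*} {T : Type*} [CommRing T]

def HDvd (𝒢 : B → AddSubgroup T) (p x : T) : Prop :=
  ∃ w, SetLike.IsHomogeneousElem 𝒢 w ∧ x = p * w

def HPrime (𝒢 : B → AddSubgroup T) (p : T) : Prop :=
  p ≠ 0 ∧ ¬IsUnit p ∧ SetLike.IsHomogeneousElem 𝒢 p ∧
    ∀ x y, SetLike.IsHomogeneousElem 𝒢 x → SetLike.IsHomogeneousElem 𝒢 y →
      HDvd 𝒢 p (x * y) → HDvd 𝒢 p x ∨ HDvd 𝒢 p y

structure HGood (𝒢 : B → AddSubgroup T) : Prop where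
  one : SetLike.IsHomogeneousElem 𝒢 1
  mul : ∀ {x y : T}, SetLike.IsHomogeneousElem 𝒢 x → SetLike.IsHomogeneousElem 𝒢 y →
    SetLike.IsHomogeneousElem 𝒢 (x * y)
  inv : ∀ {u v : T}, SetLike.IsHomogeneousElem 𝒢 u → u * v = 1 →
    ∃ w, u * w = 1 ∧ SetLike.IsHomogeneousElem 𝒢 w
  cancel : ∀ {p x y : T}, SetLike.IsHomogeneousElem 𝒢 p → SetLike.IsHomogeneousElem 𝒢 x →
    SetLike.IsHomogeneousElem 𝒢 y → p ≠ 0 → p * x = p * y → x = y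

namespace HGood
variable {𝒢 : B → AddSubgroup T} (h : HGood 𝒢)
include h

lemma prod_homog {f : Multiset T} (hf : ∀ x ∈ f, SetLike.IsHomogeneousElem 𝒢 x) :
    SetLike.IsHomogeneousElem 𝒢 f.prod := by
  induction f using Multiset.induction_on with
  | empty => simpa using h.one
  | cons a t ih =>
    rw [Multiset.prod_cons]
    exact h.mul (hf a (Multiset.mem_cons_self a t))
      (ih fun x hx => hf x (Multiset.mem_cons_of_mem hx))

lemma inv_isUnit {u : T} (hu : IsUnit u) (hhu : SetLike.IsHomogeneousElem 𝒢 u) :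
    ∃ w, u * w = 1 ∧ IsUnit w ∧ SetLike.IsHomogeneousElem 𝒢 w := by
  obtain ⟨v, hv⟩ := hu.exists_right_inv
  obtain ⟨w, hw, hwh⟩ := h.inv hhu hv
  exact ⟨w, hw, IsUnit.of_mul_eq_one (a := w) u (by rwa [mul_comm]), hwh⟩

lemma unit_mul_irred {u q : T} (hu : IsUnit u)
    (hhu : SetLike.IsHomogeneousElem 𝒢 u) (hq : HIrreducible 𝒢 q) : HIrreducible 𝒢 (u * q) := by
  obtain ⟨v, huv, hvu, hvh⟩ := h.inv_isUnit hu hhu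
  have hq_of : q = v * (u * q) := by rw [← mul_assoc, mul_comm v u, huv, one_mul]
  refine ⟨?_, ?_, h.mul hhu hq.2.2.1, ?_⟩
  · intro h0
    exact hq.1 (by rw [hq_of, h0, mul_zero])
  · intro hun
    exact hq.2.1 (hq_of ▸ hvu.mul hun)
  · intro b c hb hc heq
    have hq2 : q = (v * b) * c := by rw [hq_of, heq, mul_assoc]
    rcases hq.2.2.2 _ _ (h.mul hvh hb) hc hq2 with hb' | hc'
    · left
      have : b = u * (v * b) := by rw [← mul_assoc, huv, one_mul]
      rw [this]; exact hu.mul hb'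
    · right; exact hc'

omit h in
lemma hassoc_of_eq_mul_unit {p q w : T} (hwu : IsUnit w) (hwh : SetLike.IsHomogeneousElem 𝒢 w)
    (hq : q = p * w) : HAssociated 𝒢 p q :=
  ⟨w, hwu, hwh, by rw [hq, mul_comm]⟩

lemma prime_dvd_prod {p : T} (hp : HPrime 𝒢 p) {g : Multiset T}
    (hg : ∀ x ∈ g, SetLike.IsHomogeneousElem 𝒢 x) (hd : HDvd 𝒢 p g.prod) :
    ∃ q ∈ g, HDvd 𝒢 p q := by
  induction g using Multiset.induction_on with
  | empty =>
    obtain ⟨w, _, hw⟩ := hd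
    rw [Multiset.prod_zero] at hw
    exact absurd (IsUnit.of_mul_eq_one (a := p) w hw.symm) hp.2.1
  | cons a t ih =>
    rw [Multiset.prod_cons] at hd
    have hat := fun x hx => hg x (Multiset.mem_cons_of_mem hx)
    rcases hp.2.2.2 a t.prod (hg a (Multiset.mem_cons_self a t)) (h.prod_homog hat) hd with
      h1 | h2
    · exact ⟨a, Multiset.mem_cons_self a t, h1⟩
    · obtain ⟨q, hq, hq2⟩ := ih hat h2
      exact ⟨q, Multiset.mem_cons_of_mem hq, hq2⟩

omit h in
lemma eq_zero_of_isUnit_prod {f : Multiset T} (hf : ∀ x ∈ f, HIrreducible 𝒢 x)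
    (hu : IsUnit f.prod) : f = 0 := by
  classical
  by_contra hf0
  obtain ⟨q, hq⟩ := Multiset.exists_mem_of_ne_zero hf0
  refine (hf q hq).2.1 (isUnit_of_mul_isUnit_left (y := (f.erase q).prod) ?_)
  rw [Multiset.prod_erase hq]
  exact hu

lemma uniqueness (hpr : ∀ p, HIrreducible 𝒢 p → HPrime 𝒢 p) :
    ∀ f g : Multiset T, (∀ x ∈ f, HIrreducible 𝒢 x) → (∀ x ∈ g, HIrreducible 𝒢 x) →
      f.prod = g.prod → Multiset.Rel (HAssociated 𝒢) f g := by
  classical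
  intro f
  induction f using Multiset.induction_on with
  | empty =>
    intro g _ hg hprod
    rw [Multiset.prod_zero] at hprod
    have : g = 0 := eq_zero_of_isUnit_prod hg (by rw [← hprod]; exact isUnit_one)
    rw [this]
    exact Multiset.rel_zero_left.2 rfl
  | cons p f' ih =>
    intro g hf hg hprod
    have hp : HIrreducible 𝒢 p := hf p (Multiset.mem_cons_self p f')
    have hpp := hpr p hp
    have hf' : ∀ x ∈ f', HIrreducible 𝒢 x := fun x hx => hf x (Multiset.mem_cons_of_mem hx)
    have hf'h : ∀ x ∈ f', SetLike.IsHomogeneousElem 𝒢 x := fun x hx => (hf' x hx).2.2.1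
    have hdvd : HDvd 𝒢 p g.prod :=
      ⟨f'.prod, h.prod_homog hf'h, by rw [← hprod, Multiset.prod_cons]⟩
    obtain ⟨q, hqg, w, hwh, hqw⟩ :=
      h.prime_dvd_prod hpp (fun x hx => (hg x hx).2.2.1) hdvd
    have hq := hg q hqg
    have hwu : IsUnit w := by
      rcases hq.2.2.2 p w hpp.2.2.1 hwh hqw with h1 | h2
      · exact absurd h1 hpp.2.1
      · exact h2
    have hassoc : HAssociated 𝒢 p q := hassoc_of_eq_mul_unit hwu hwh hqw
    have hgsplit : g = q ::ₘ g.erase q := (Multiset.cons_erase hqg).symm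
    have herase_h : ∀ x ∈ g.erase q, HIrreducible 𝒢 x :=
      fun x hx => hg x (Multiset.mem_of_mem_erase hx)
    have herase_hh : ∀ x ∈ g.erase q, SetLike.IsHomogeneousElem 𝒢 x :=
      fun x hx => (herase_h x hx).2.2.1
    have hprod2 : p * f'.prod = p * (w * (g.erase q).prod) := by
      calc p * f'.prod = (p ::ₘ f').prod := (Multiset.prod_cons _ _).symm
      _ = g.prod := hprod
      _ = q * (g.erase q).prod := by rw [← Multiset.prod_cons, ← hgsplit]
      _ = p * (w * (g.erase q).prod) := by rw [hqw]; ring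
    have hcan : f'.prod = w * (g.erase q).prod :=
      h.cancel hpp.2.2.1 (h.prod_homog hf'h)
        (h.mul hwh (h.prod_homog herase_hh)) hpp.1 hprod2
    rcases Multiset.empty_or_exists_mem (g.erase q) with hE | ⟨q', hq'⟩
    · have hf'0 : f' = 0 := eq_zero_of_isUnit_prod hf'
        (by rw [hcan, hE, Multiset.prod_zero, mul_one]; exact hwu)
      rw [hgsplit, hE, hf'0]
      exact Multiset.Rel.cons hassoc (Multiset.rel_zero_left.2 rfl)
    · set g₂ := (g.erase q).erase q' with hg₂
      have hE : g.erase q = q' ::ₘ g₂ := (Multiset.cons_erase hq').symm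
      have hq'irr : HIrreducible 𝒢 q' := herase_h q' hq'
      have hg₂ : ∀ x ∈ g₂, HIrreducible 𝒢 x :=
        fun x hx => herase_h x (hE ▸ Multiset.mem_cons_of_mem hx)
      have hg'' : ∀ x ∈ (w * q') ::ₘ g₂, HIrreducible 𝒢 x := by
        intro x hx
        rcases Multiset.mem_cons.1 hx with rfl | hx2
        · exact h.unit_mul_irred hwu hwh hq'irr
        · exact hg₂ x hx2
      have hprod3 : f'.prod = ((w * q') ::ₘ g₂).prod := by
        rw [hcan, hE, Multiset.prod_cons, Multiset.prod_cons]; ring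
      obtain ⟨x, f₂, hx1, hrel2, hsplit⟩ := Multiset.rel_cons_right.1 (ih _ hf' hg'' hprod3)
      obtain ⟨u, huu, huh, hueq⟩ := hx1
      obtain ⟨v, hwv, hvu, hvh⟩ := h.inv_isUnit hwu hwh
      have hx2 : HAssociated 𝒢 x q' := by
        refine ⟨v * u, hvu.mul huu, h.mul hvh huh, ?_⟩
        have : q' = v * (w * q') := by rw [← mul_assoc, mul_comm v w, hwv, one_mul]
        rw [this, hueq, ← mul_assoc]
      rw [hgsplit, hE, hsplit]
      exact Multiset.Rel.cons hassoc (Multiset.Rel.cons hx2 hrel2)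

lemma prime_unit_mul {u p : T} (hu : IsUnit u) (huh : SetLike.IsHomogeneousElem 𝒢 u)
    (hp : HPrime 𝒢 p) : HPrime 𝒢 (u * p) := by
  obtain ⟨v, huv, hvu, hvh⟩ := h.inv_isUnit hu huh
  have hpv : p = v * (u * p) := by rw [← mul_assoc, mul_comm v u, huv, one_mul]
  refine ⟨fun h0 => hp.1 (by rw [hpv, h0, mul_zero]), fun h0 => hp.2.1 (hpv ▸ hvu.mul h0),
    h.mul huh hp.2.2.1, ?_⟩
  rintro x y hx hy ⟨w, hwh, hxyw⟩
  have hdvd : HDvd 𝒢 p (x * y) := ⟨u * w, h.mul huh hwh, by rw [hxyw]; ring⟩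
  rcases hp.2.2.2 x y hx hy hdvd with ⟨t, hth, ht⟩ | ⟨t, hth, ht⟩
  · refine Or.inl ⟨v * t, h.mul hvh hth, ?_⟩
    calc x = p * t := ht
    _ = (u * v) * (p * t) := by rw [huv, one_mul]
    _ = u * p * (v * t) := by ring
  · refine Or.inr ⟨v * t, h.mul hvh hth, ?_⟩
    calc y = p * t := ht
    _ = (u * v) * (p * t) := by rw [huv, one_mul]
    _ = u * p * (v * t) := by ring

lemma hprime_of_hirr
    (hnzd : ∀ {x y : T}, SetLike.IsHomogeneousElem 𝒢 x → SetLike.IsHomogeneousElem 𝒢 y →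
      x ≠ 0 → y ≠ 0 → x * y ≠ 0)
    (hfac : GradedFactorial 𝒢) {p : T} (hp : HIrreducible 𝒢 p) : HPrime 𝒢 p := by
  classical
  refine ⟨hp.1, hp.2.1, hp.2.2.1, ?_⟩
  rintro x y hx hy ⟨t, hth, hxy⟩
  obtain ⟨b0, -⟩ := hp.2.2.1
  by_cases hx0 : x = 0
  · exact Or.inl ⟨0, ⟨b0, zero_mem _⟩, by rw [hx0, mul_zero]⟩
  by_cases hy0 : y = 0
  · exact Or.inr ⟨0, ⟨b0, zero_mem _⟩, by rw [hy0, mul_zero]⟩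
  by_cases hxu : IsUnit x
  · right
    obtain ⟨v, hxv, hvu, hvh⟩ := h.inv_isUnit hxu hx
    refine ⟨v * t, h.mul hvh hth, ?_⟩
    calc y = (v * x) * y := by rw [mul_comm v x, hxv, one_mul]
    _ = v * (x * y) := by ring
    _ = p * (v * t) := by rw [hxy]; ring
  by_cases hyu : IsUnit y
  · left
    obtain ⟨v, hyv, hvu, hvh⟩ := h.inv_isUnit hyu hy
    refine ⟨v * t, h.mul hvh hth, ?_⟩
    calc x = (v * y) * x := by rw [mul_comm v y, hyv, one_mul]
    _ = v * (x * y) := by ring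
    _ = p * (v * t) := by rw [hxy]; ring
  have hxyne : x * y ≠ 0 := hnzd hx hy hx0 hy0
  have ht0 : t ≠ 0 := fun h0 => hxyne (by rw [hxy, h0, mul_zero])
  obtain ⟨f, hfirr, hfprod⟩ := hfac.1 x hx0 hxu hx
  obtain ⟨g, hgirr, hgprod⟩ := hfac.1 y hy0 hyu hy
  have hfgirr : ∀ z ∈ f + g, HIrreducible 𝒢 z := by
    intro z hz
    rcases Multiset.mem_add.1 hz with hz | hz
    · exact hfirr z hz
    · exact hgirr z hz
  have hf0 : f ≠ 0 := by
    rintro rfl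
    exact hxu (by rw [← hfprod, Multiset.prod_zero]; exact isUnit_one)
  have hg0 : g ≠ 0 := by
    rintro rfl
    exact hyu (by rw [← hgprod, Multiset.prod_zero]; exact isUnit_one)
  by_cases htu : IsUnit t
  · exfalso
    have hirr_tp : HIrreducible 𝒢 (t * p) := h.unit_mul_irred htu hth hp
    have heq : (f + g).prod = ({t * p} : Multiset T).prod := by
      rw [Multiset.prod_add, hfprod, hgprod, hxy, Multiset.prod_singleton, mul_comm]
    have hrel := hfac.2 (f + g) {t * p} hfgirr
      (by intro z hz; rw [Multiset.mem_singleton.1 hz]; exact hirr_tp) heq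
    have hcard := Multiset.card_eq_card_of_rel hrel
    rw [Multiset.card_add, Multiset.card_singleton] at hcard
    have h1 : 0 < Multiset.card f := Multiset.card_pos.2 hf0
    have h2 : 0 < Multiset.card g := Multiset.card_pos.2 hg0
    omega
  · obtain ⟨ht, htirr, htprod⟩ := hfac.1 t ht0 htu hth
    have heq : (f + g).prod = (p ::ₘ ht).prod := by
      rw [Multiset.prod_add, hfprod, hgprod, hxy, Multiset.prod_cons, htprod]
    have hrel := hfac.2 (f + g) (p ::ₘ ht) hfgirr
      (by
        intro z hz
        rcases Multiset.mem_cons.1 hz with rfl | hz2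
        · exact hp
        · exact htirr z hz2) heq
    obtain ⟨q, rest, hqp, hrelrest, hfg⟩ := Multiset.rel_cons_right.1 hrel
    obtain ⟨u, huu, huh, hueq⟩ := hqp
    obtain ⟨v, huv, hvu, hvh⟩ := h.inv_isUnit huu huh
    have hqmem : q ∈ f + g := hfg ▸ Multiset.mem_cons_self q rest
    have hqp2 : q = p * v := by
      calc q = (v * u) * q := by rw [mul_comm v u, huv, one_mul]
      _ = v * (u * q) := by ring
      _ = p * v := by rw [← hueq, mul_comm]
    rcases Multiset.mem_add.1 hqmem with hqf | hqg
    · left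
      refine ⟨v * (f.erase q).prod, h.mul hvh (h.prod_homog
        (fun z hz => (hfirr z (Multiset.mem_of_mem_erase hz)).2.2.1)), ?_⟩
      rw [← hfprod, ← Multiset.prod_erase hqf, hqp2]; ring
    · right
      refine ⟨v * (g.erase q).prod, h.mul hvh (h.prod_homog
        (fun z hz => (hgirr z (Multiset.mem_of_mem_erase hz)).2.2.1)), ?_⟩
      rw [← hgprod, ← Multiset.prod_erase hqg, hqp2]; ring

end HGood
end Generic
section Instances
open Polynomial AdjoinRoot

variable {A : Type*} [AddCommGroup A] [DecidableEq A]
  {R : Type*} [CommRing R] [IsDomain R]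
  (𝒜 : A → AddSubgroup R) [GradedRing 𝒜]

lemma homog_unit_inv {u v : R} (hu : SetLike.IsHomogeneousElem 𝒜 u) (huv : u * v = 1) :
    ∃ w, u * w = 1 ∧ SetLike.IsHomogeneousElem 𝒜 w := by
  obtain ⟨a, ha⟩ := hu
  refine ⟨DirectSum.decompose 𝒜 v (-a), ?_, ⟨-a, SetLike.coe_mem _⟩⟩
  have h1 : (DirectSum.decompose 𝒜 (u * v) (a + -a) : R) = u * DirectSum.decompose 𝒜 v (-a) :=
    DirectSum.coe_decompose_mul_add_of_left_mem 𝒜 ha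
  rw [huv, add_neg_cancel] at h1
  rw [← h1, DirectSum.decompose_of_mem_same 𝒜 (SetLike.one_mem_graded 𝒜)]

lemma hgood_R : HGood 𝒜 where
  one := ⟨0, SetLike.one_mem_graded 𝒜⟩
  mul := fun hx hy => hx.elim fun a ha => hy.elim fun b hb => ⟨a + b, SetLike.mul_mem_graded ha hb⟩
  inv := fun hu huv => homog_unit_inv 𝒜 hu huv
  cancel := fun _ _ _ hp0 heq => mul_left_cancel₀ hp0 heq

variable (d : A) (s : R) (n : ℕ)

lemma root_isUnit_of_dvd_unit {r : R} {i : ℕ}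
    (hn0 : 0 < n) (hsu : ¬IsUnit s) (hi0 : i ≠ 0)
    (hru : IsUnit (of (X ^ n - C s) r * root (X ^ n - C s) ^ i)) : False := by
  have hz : IsUnit (root (X ^ n - C s)) := by
    have hdvd : root (X ^ n - C s) ∣ of (X ^ n - C s) r * root (X ^ n - C s) ^ i := by
      refine Dvd.intro (of (X ^ n - C s) r * root (X ^ n - C s) ^ (i - 1)) ?_
      have h3 : root (X ^ n - C s) ^ (i - 1) * root (X ^ n - C s) = root (X ^ n - C s) ^ i := by
        rw [← pow_succ]; congr 1; omega
      rw [← h3]; ring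
    exact isUnit_of_dvd_unit hdvd hru
  have : IsUnit (of (X ^ n - C s) s) := by
    rw [← root_pow_n']; exact hz.pow n
  exact hsu (isUnit_of_iff s n hn0 this)



lemma hgood_R' (hs : s ∈ 𝒜 d) (hn0 : 0 < n) (hs0 : s ≠ 0) (hsu : ¬IsUnit s) :
    HGood (rootGrading 𝒜 d s n) where
  one := (homog_iff 𝒜 d s n hn0 1).2 ⟨0, 0, 1, hn0, SetLike.one_mem_graded 𝒜, by simp⟩
  mul := by
    intro x y hx hy
    obtain ⟨a, i, r, hi, hr, rfl⟩ := (homog_iff 𝒜 d s n hn0 x).1 hx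
    obtain ⟨a', j, r', hj, hr', rfl⟩ := (homog_iff 𝒜 d s n hn0 y).1 hy
    rcases lt_or_ge (i + j) n with hij | hij
    · rw [mul_form_lt]
      exact (homog_iff 𝒜 d s n hn0 _).2
        ⟨a + a', i + j, r * r', hij, SetLike.mul_mem_graded hr hr', rfl⟩
    · rw [mul_form_ge s n r r' hij]
      exact (homog_iff 𝒜 d s n hn0 _).2 ⟨a + a' + d, i + j - n, r * r' * s, by omega,
        SetLike.mul_mem_graded (SetLike.mul_mem_graded hr hr') hs, rfl⟩
  inv := by
    intro u v hu huv
    obtain ⟨a, i, r, hi, hr, rfl⟩ := (homog_iff 𝒜 d s n hn0 u).1 hu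
    have hru : IsUnit (of (X ^ n - C s) r * root (X ^ n - C s) ^ i) :=
      IsUnit.of_mul_eq_one (a := _) _ huv
    have hi0 : i = 0 := by
      by_contra hi0
      exact root_isUnit_of_dvd_unit s n hn0 hsu hi0 hru
    subst hi0
    rw [pow_zero, mul_one] at hru ⊢
    obtain ⟨r', hr'⟩ := (isUnit_of_iff s n hn0 hru).exists_right_inv
    obtain ⟨w, hw, b, hb⟩ := homog_unit_inv 𝒜 ⟨a, hr⟩ hr'
    refine ⟨of (X ^ n - C s) w, ?_, (homog_iff 𝒜 d s n hn0 _).2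
      ⟨b, 0, w, hn0, hb, by rw [pow_zero, mul_one]⟩⟩
    rw [← map_mul, hw, map_one]
  cancel := by
    intro p x y hp hx hy hp0 heq
    obtain ⟨a, i, r, hi, hr, rfl⟩ := (homog_iff 𝒜 d s n hn0 p).1 hp
    obtain ⟨ax, j, rx, hj, hrx, rfl⟩ := (homog_iff 𝒜 d s n hn0 x).1 hx
    obtain ⟨ay, k, ry, hk, hry, rfl⟩ := (homog_iff 𝒜 d s n hn0 y).1 hy
    have hr0 : r ≠ 0 := fun h0 => hp0 (by rw [h0, map_zero, zero_mul])
    rcases lt_or_ge (i + j) n with h1 | h1 <;> rcases lt_or_ge (i + k) n with h2 | h2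
    · rw [mul_form_lt, mul_form_lt] at heq
      rcases coeff_unique s n hn0 (by omega) (by omega) heq with ⟨hA, hB⟩ | ⟨hA, hB⟩
      · have hrx0 : rx = 0 := by
          rcases mul_eq_zero.1 hA with h | h
          · exact absurd h hr0
          · exact h
        have hry0 : ry = 0 := by
          rcases mul_eq_zero.1 hB with h | h
          · exact absurd h hr0
          · exact h
        rw [hrx0, hry0, map_zero, zero_mul, zero_mul]
      · have hjk : j = k := by omega
        have : rx = ry := mul_left_cancel₀ hr0 hB
        rw [hjk, this]
    · rw [mul_form_lt, mul_form_ge s n r ry h2] at heq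
      rcases coeff_unique s n hn0 (by omega) (by omega) heq with ⟨hA, hB⟩ | ⟨hA, hB⟩
      · have hrx0 : rx = 0 := by
          rcases mul_eq_zero.1 hA with h | h
          · exact absurd h hr0
          · exact h
        have hry0 : ry = 0 := by
          rcases mul_eq_zero.1 hB with h | h
          · rcases mul_eq_zero.1 h with h' | h'
            · exact absurd h' hr0
            · exact h'
          · exact absurd h hs0
        rw [hrx0, hry0, map_zero, zero_mul, zero_mul]
      · omega
    · rw [mul_form_ge s n r rx h1, mul_form_lt] at heq
      rcases coeff_unique s n hn0 (by omega) (by omega) heq with ⟨hA, hB⟩ | ⟨hA, hB⟩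
      · have hrx0 : rx = 0 := by
          rcases mul_eq_zero.1 hA with h | h
          · rcases mul_eq_zero.1 h with h' | h'
            · exact absurd h' hr0
            · exact h'
          · exact absurd h hs0
        have hry0 : ry = 0 := by
          rcases mul_eq_zero.1 hB with h | h
          · exact absurd h hr0
          · exact h
        rw [hrx0, hry0, map_zero, zero_mul, zero_mul]
      · omega
    · rw [mul_form_ge s n r rx h1, mul_form_ge s n r ry h2] at heq
      rcases coeff_unique s n hn0 (by omega) (by omega) heq with ⟨hA, hB⟩ | ⟨hA, hB⟩
      · have hrx0 : rx = 0 := by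
          rcases mul_eq_zero.1 hA with h | h
          · rcases mul_eq_zero.1 h with h' | h'
            · exact absurd h' hr0
            · exact h'
          · exact absurd h hs0
        have hry0 : ry = 0 := by
          rcases mul_eq_zero.1 hB with h | h
          · rcases mul_eq_zero.1 h with h' | h'
            · exact absurd h' hr0
            · exact h'
          · exact absurd h hs0
        rw [hrx0, hry0, map_zero, zero_mul, zero_mul]
      · have hjk : j = k := by omega
        have h5 : rx * s = ry * s := mul_left_cancel₀ hr0 (by
          rw [← mul_assoc, ← mul_assoc]; exact hB)
        have hxy : rx = ry := mul_right_cancel₀ hs0 h5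
        rw [hjk, hxy]

end Instances
section Main
open Polynomial AdjoinRoot

variable {A : Type*} [AddCommGroup A] [DecidableEq A]
  {R : Type*} [CommRing R] [IsDomain R]
  (𝒜 : A → AddSubgroup R) [GradedRing 𝒜]
  (d : A) (s : R) (n : ℕ)

lemma homog_zero' (hn0 : 0 < n) :
    SetLike.IsHomogeneousElem (rootGrading 𝒜 d s n) (0 : AdjoinRoot (X ^ n - C s)) :=
  ⟨0, AddSubgroup.zero_mem _⟩

lemma homog_of_pow (hn0 : 0 < n) {r : R} {a : A} {i : ℕ} (hi : i < n) (hr : r ∈ 𝒜 a) :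
    SetLike.IsHomogeneousElem (rootGrading 𝒜 d s n)
      (of (X ^ n - C s) r * root (X ^ n - C s) ^ i) :=
  (homog_iff 𝒜 d s n hn0 _).2 ⟨a, i, r, hi, hr, rfl⟩

lemma homog_of' (hn0 : 0 < n) {r : R} {a : A} (hr : r ∈ 𝒜 a) :
    SetLike.IsHomogeneousElem (rootGrading 𝒜 d s n) (of (X ^ n - C s) r) := by
  have := homog_of_pow 𝒜 d s n hn0 hn0 hr
  rwa [pow_zero, mul_one] at this

lemma of_ne_zero' (hn0 : 0 < n) {r : R} (hr : r ≠ 0) : of (X ^ n - C s) r ≠ 0 := by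
  intro h
  exact hr (of_injective' s n hn0 (by rw [h, map_zero]))

/-- irreducibility in `R'` of `of q` for `q` irreducible in `R` and not associated to `s` -/
lemma hirr_of (hn0 : 0 < n) (hs : s ∈ 𝒜 d) (hsu : ¬IsUnit s)
    {q : R} (hq : HIrreducible 𝒜 q) (hqs : ¬HAssociated 𝒜 s q) :
    HIrreducible (rootGrading 𝒜 d s n) (of (X ^ n - C s) q) := by
  obtain ⟨aq, haq⟩ := hq.2.2.1
  refine ⟨of_ne_zero' s n hn0 hq.1, fun h => hq.2.1 (isUnit_of_iff s n hn0 h),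
    homog_of' 𝒜 d s n hn0 haq, ?_⟩
  intro b c hb hc heq
  obtain ⟨ab, i, rb, hi, hrb, rfl⟩ := (homog_iff 𝒜 d s n hn0 b).1 hb
  obtain ⟨ac, j, rc, hj, hrc, rfl⟩ := (homog_iff 𝒜 d s n hn0 c).1 hc
  have heq0 : of (X ^ n - C s) q * root (X ^ n - C s) ^ 0
      = of (X ^ n - C s) rb * root (X ^ n - C s) ^ i *
        (of (X ^ n - C s) rc * root (X ^ n - C s) ^ j) := by
    rw [pow_zero, mul_one]; exact heq
  rcases lt_or_ge (i + j) n with hij | hij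
  · rw [mul_form_lt] at heq0
    rcases coeff_unique s n hn0 hn0 hij heq0 with ⟨h1, _⟩ | ⟨h1, h2⟩
    · exact absurd h1 hq.1
    · have hi0 : i = 0 := by omega
      have hj0 : j = 0 := by omega
      rcases hq.2.2.2 rb rc ⟨ab, hrb⟩ ⟨ac, hrc⟩ h2 with h | h
      · left; rw [hi0, pow_zero, mul_one]; exact (of (X ^ n - C s)).isUnit_map h
      · right; rw [hj0, pow_zero, mul_one]; exact (of (X ^ n - C s)).isUnit_map h
  · rw [mul_form_ge s n rb rc hij] at heq0
    rcases coeff_unique s n hn0 hn0 (by omega) heq0 with ⟨h1, _⟩ | ⟨h1, h2⟩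
    · exact absurd h1 hq.1
    · exfalso
      rcases hq.2.2.2 (rb * rc) s ⟨ab + ac, SetLike.mul_mem_graded hrb hrc⟩ ⟨d, hs⟩ h2 with h | h
      · exact hqs ⟨rb * rc, h, ⟨ab + ac, SetLike.mul_mem_graded hrb hrc⟩, by rw [h2]⟩
      · exact hsu h

/-- irreducibility in `R'` of `u·z` for `u` a homogeneous unit -/
lemma hirr_unit_z (hn : 2 ≤ n) (hsu : ¬IsUnit s) {v : R} {a : A}
    (hv : IsUnit v) (hva : v ∈ 𝒜 a) :
    HIrreducible (rootGrading 𝒜 d s n) (of (X ^ n - C s) v * root (X ^ n - C s)) := by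
  have hn0 : 0 < n := by omega
  have hform : of (X ^ n - C s) v * root (X ^ n - C s)
      = of (X ^ n - C s) v * root (X ^ n - C s) ^ 1 := by rw [pow_one]
  refine ⟨?_, ?_, ?_, ?_⟩
  · rw [hform]; exact of_mul_pow_ne_zero s n hn0 hv.ne_zero (by omega)
  · intro h
    exact root_isUnit_of_dvd_unit s n hn0 hsu one_ne_zero (hform ▸ h)
  · rw [hform]; exact homog_of_pow 𝒜 d s n hn0 (by omega) hva
  · intro b c hb hc heq
    obtain ⟨ab, i, rb, hi, hrb, rfl⟩ := (homog_iff 𝒜 d s n hn0 b).1 hb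
    obtain ⟨ac, j, rc, hj, hrc, rfl⟩ := (homog_iff 𝒜 d s n hn0 c).1 hc
    rw [hform] at heq
    rcases lt_or_ge (i + j) n with hij | hij
    · rw [mul_form_lt] at heq
      rcases coeff_unique s n hn0 (by omega) hij heq with ⟨h1, _⟩ | ⟨h1, h2⟩
      · exact absurd h1 hv.ne_zero
      · rcases (show i = 0 ∧ j = 1 ∨ i = 1 ∧ j = 0 by omega) with ⟨hi0, _⟩ | ⟨_, hj0⟩
        · left
          rw [hi0, pow_zero, mul_one]
          exact (of (X ^ n - C s)).isUnit_map (isUnit_of_mul_isUnit_left (h2 ▸ hv))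
        · right
          rw [hj0, pow_zero, mul_one]
          exact (of (X ^ n - C s)).isUnit_map (isUnit_of_mul_isUnit_right (h2 ▸ hv))
    · rw [mul_form_ge s n rb rc hij] at heq
      rcases coeff_unique s n hn0 (by omega) (by omega) heq with ⟨h1, _⟩ | ⟨_, h2⟩
      · exact absurd h1 hv.ne_zero
      · exact absurd (isUnit_of_mul_isUnit_right (h2 ▸ hv)) hsu

lemma hirr_z (hn : 2 ≤ n) (hsu : ¬IsUnit s) :
    HIrreducible (rootGrading 𝒜 d s n) (root (X ^ n - C s)) := by
  have := hirr_unit_z 𝒜 d s n hn hsu isUnit_one (SetLike.one_mem_graded 𝒜)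
  rwa [map_one, one_mul] at this

/-- if `z` divides a nonzero element of the image of `R` then `s` divides its preimage -/
lemma z_dvd_of (hn0 : 0 < n) {r rw : R} (hr0 : r ≠ 0) {l : ℕ} (hl : l < n)
    (heq : of (X ^ n - C s) r =
      root (X ^ n - C s) * (of (X ^ n - C s) rw * root (X ^ n - C s) ^ l)) :
    l + 1 = n ∧ r = rw * s := by
  have heq2 : of (X ^ n - C s) r * root (X ^ n - C s) ^ 0
      = of (X ^ n - C s) rw * root (X ^ n - C s) ^ (l + 1) := by
    rw [pow_zero, mul_one, heq, pow_succ]; ring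
  rcases lt_or_ge (l + 1) n with hlt | hge
  · rcases coeff_unique s n hn0 hn0 hlt heq2 with ⟨h1, _⟩ | ⟨h1, _⟩
    · exact absurd h1 hr0
    · omega
  · have hln : l + 1 = n := by omega
    rw [hln, root_pow_n', ← map_mul] at heq2
    simp only [pow_zero, mul_one] at heq2
    refine ⟨hln, ?_⟩
    have h5 := of_injective' s n hn0 heq2
    rw [h5]

/-- `z` is h-prime in `R'` -/
lemma hprime_z (hn : 2 ≤ n) (hs : s ∈ 𝒜 d) (hs0 : s ≠ 0) (hsu : ¬IsUnit s)
    (hfac : GradedFactorial 𝒜) (hsirr : HIrreducible 𝒜 s) :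
    HPrime (rootGrading 𝒜 d s n) (root (X ^ n - C s)) := by
  have hn0 : 0 < n := by omega
  have hzirr := hirr_z 𝒜 d s n hn hsu
  have hsprime : HPrime 𝒜 s :=
    (hgood_R 𝒜).hprime_of_hirr (fun _ _ hx0 hy0 => mul_ne_zero hx0 hy0) hfac hsirr
  refine ⟨hzirr.1, hzirr.2.1, hzirr.2.2.1, ?_⟩
  rintro x y hx hy ⟨w, hwh, hxyw⟩
  by_cases hx0 : x = 0
  · exact Or.inl ⟨0, homog_zero' 𝒜 d s n hn0, by rw [hx0, mul_zero]⟩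
  by_cases hy0 : y = 0
  · exact Or.inr ⟨0, homog_zero' 𝒜 d s n hn0, by rw [hy0, mul_zero]⟩
  obtain ⟨ax, j, rx, hj, hrx, rfl⟩ := (homog_iff 𝒜 d s n hn0 x).1 hx
  obtain ⟨ay, k, ry, hk, hry, rfl⟩ := (homog_iff 𝒜 d s n hn0 y).1 hy
  have hrx0 : rx ≠ 0 := fun h => hx0 (by rw [h, map_zero, zero_mul])
  have hry0 : ry ≠ 0 := fun h => hy0 (by rw [h, map_zero, zero_mul])
  obtain ⟨aw, l, rw', hl, hrw, rfl⟩ := (homog_iff 𝒜 d s n hn0 w).1 hwh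
  by_cases hjz : j ≠ 0
  · left
    refine ⟨of (X ^ n - C s) rx * root (X ^ n - C s) ^ (j - 1),
      homog_of_pow 𝒜 d s n hn0 (by omega) hrx, ?_⟩
    have : root (X ^ n - C s) ^ (j - 1) * root (X ^ n - C s) = root (X ^ n - C s) ^ j := by
      rw [← pow_succ]; congr 1; omega
    rw [← this]; ring
  by_cases hkz : k ≠ 0
  · right
    refine ⟨of (X ^ n - C s) ry * root (X ^ n - C s) ^ (k - 1),
      homog_of_pow 𝒜 d s n hn0 (by omega) hry, ?_⟩
    have : root (X ^ n - C s) ^ (k - 1) * root (X ^ n - C s) = root (X ^ n - C s) ^ k := by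
      rw [← pow_succ]; congr 1; omega
    rw [← this]; ring
  push_neg at hjz hkz
  subst hjz; subst hkz
  simp only [pow_zero, mul_one] at hxyw
  rw [← map_mul] at hxyw
  obtain ⟨-, hdvd⟩ := z_dvd_of s n hn0 (mul_ne_zero hrx0 hry0) hl hxyw
  have : HDvd 𝒜 s (rx * ry) := ⟨rw', ⟨aw, hrw⟩, by rw [hdvd]; ring⟩
  rcases hsprime.2.2.2 rx ry ⟨ax, hrx⟩ ⟨ay, hry⟩ this with ⟨t, hth, ht⟩ | ⟨t, hth, ht⟩
  · left
    obtain ⟨at', hat⟩ := hth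
    refine ⟨root (X ^ n - C s) ^ (n - 1) * of (X ^ n - C s) t, ?_, ?_⟩
    · have h6 := homog_of_pow 𝒜 d s n hn0 (show n - 1 < n by omega) hat
      rwa [mul_comm] at h6
    · rw [pow_zero, mul_one, ht, map_mul, ← root_pow_n']
      have : root (X ^ n - C s) * root (X ^ n - C s) ^ (n - 1) = root (X ^ n - C s) ^ n := by
        rw [← pow_succ']; congr 1; omega
      rw [← this]; ring
  · right
    obtain ⟨at', hat⟩ := hth
    refine ⟨root (X ^ n - C s) ^ (n - 1) * of (X ^ n - C s) t, ?_, ?_⟩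
    · have h6 := homog_of_pow 𝒜 d s n hn0 (show n - 1 < n by omega) hat
      rwa [mul_comm] at h6
    · rw [pow_zero, mul_one, ht, map_mul, ← root_pow_n']
      have : root (X ^ n - C s) * root (X ^ n - C s) ^ (n - 1) = root (X ^ n - C s) ^ n := by
        rw [← pow_succ']; congr 1; omega
      rw [← this]; ring

/-- `of q` is h-prime in `R'` for `q` irreducible not associated to `s` -/
lemma hprime_of (hn : 2 ≤ n) (hs : s ∈ 𝒜 d) (hs0 : s ≠ 0) (hsu : ¬IsUnit s)
    (hfac : GradedFactorial 𝒜) (hsirr : HIrreducible 𝒜 s)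
    {q : R} (hq : HIrreducible 𝒜 q) (hqs : ¬HAssociated 𝒜 s q) :
    HPrime (rootGrading 𝒜 d s n) (of (X ^ n - C s) q) := by
  have hn0 : 0 < n := by omega
  have hqirr' := hirr_of 𝒜 d s n hn0 hs hsu hq hqs
  have hqprime : HPrime 𝒜 q :=
    (hgood_R 𝒜).hprime_of_hirr (fun _ _ hx0 hy0 => mul_ne_zero hx0 hy0) hfac hq
  refine ⟨hqirr'.1, hqirr'.2.1, hqirr'.2.2.1, ?_⟩
  rintro x y hx hy ⟨w, hwh, hxyw⟩
  by_cases hx0 : x = 0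
  · exact Or.inl ⟨0, homog_zero' 𝒜 d s n hn0, by rw [hx0, mul_zero]⟩
  by_cases hy0 : y = 0
  · exact Or.inr ⟨0, homog_zero' 𝒜 d s n hn0, by rw [hy0, mul_zero]⟩
  obtain ⟨ax, j, rx, hj, hrx, rfl⟩ := (homog_iff 𝒜 d s n hn0 x).1 hx
  obtain ⟨ay, k, ry, hk, hry, rfl⟩ := (homog_iff 𝒜 d s n hn0 y).1 hy
  have hrx0 : rx ≠ 0 := fun h => hx0 (by rw [h, map_zero, zero_mul])
  have hry0 : ry ≠ 0 := fun h => hy0 (by rw [h, map_zero, zero_mul])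
  obtain ⟨aw, l, rw', hl, hrw, rfl⟩ := (homog_iff 𝒜 d s n hn0 w).1 hwh
  have hq_dvd : HDvd 𝒜 q rx ∨ HDvd 𝒜 q ry := by
    have hform : of (X ^ n - C s) q * (of (X ^ n - C s) rw' * root (X ^ n - C s) ^ l)
        = of (X ^ n - C s) (q * rw') * root (X ^ n - C s) ^ l := by
      rw [map_mul]; ring
    rcases lt_or_ge (j + k) n with hjk | hjk
    · rw [mul_form_lt, hform] at hxyw
      rcases coeff_unique s n hn0 (by omega) hl hxyw with ⟨h1, _⟩ | ⟨_, h2⟩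
      · exact absurd h1 (mul_ne_zero hrx0 hry0)
      · exact hqprime.2.2.2 rx ry ⟨ax, hrx⟩ ⟨ay, hry⟩ ⟨rw', ⟨aw, hrw⟩, h2⟩
    · rw [mul_form_ge s n rx ry hjk, hform] at hxyw
      rcases coeff_unique s n hn0 (by omega) hl hxyw with ⟨h1, _⟩ | ⟨_, h2⟩
      · exact absurd h1 (mul_ne_zero (mul_ne_zero hrx0 hry0) hs0)
      · have hq2 : HDvd 𝒜 q (rx * ry) ∨ HDvd 𝒜 q s := by
          refine hqprime.2.2.2 (rx * ry) s ⟨ax + ay, SetLike.mul_mem_graded hrx hry⟩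
            ⟨d, hs⟩ ⟨rw', ⟨aw, hrw⟩, h2⟩
        rcases hq2 with h3 | ⟨t, hth, ht⟩
        · exact hqprime.2.2.2 rx ry ⟨ax, hrx⟩ ⟨ay, hry⟩ h3
        · exfalso
          rcases hsirr.2.2.2 q t hqprime.2.2.1 hth ht with h4 | h4
          · exact hqprime.2.1 h4
          · obtain ⟨t', htt', ht'u, ht'h⟩ := (hgood_R 𝒜).inv_isUnit h4 hth
            refine hqs ⟨t', ht'u, ht'h, ?_⟩
            calc q = q * (t * t') := by rw [htt', mul_one]
            _ = (q * t) * t' := by ring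
            _ = t' * s := by rw [← ht]; ring
  rcases hq_dvd with ⟨t, ⟨at', hat⟩, ht⟩ | ⟨t, ⟨at', hat⟩, ht⟩
  · left
    exact ⟨of (X ^ n - C s) t * root (X ^ n - C s) ^ j,
      homog_of_pow 𝒜 d s n hn0 hj hat, by rw [ht, map_mul]; ring⟩
  · right
    exact ⟨of (X ^ n - C s) t * root (X ^ n - C s) ^ k,
      homog_of_pow 𝒜 d s n hn0 hk hat, by rw [ht, map_mul]; ring⟩

/-- products of elements h-associated to `s` -/
lemma prod_assoc_pow (hs : s ∈ 𝒜 d) :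
    ∀ t : Multiset R, (∀ q ∈ t, HAssociated 𝒜 s q) →
      ∃ U, IsUnit U ∧ SetLike.IsHomogeneousElem 𝒜 U ∧ t.prod = U * s ^ Multiset.card t := by
  intro t
  induction t using Multiset.induction_on with
  | empty =>
    intro _
    exact ⟨1, isUnit_one, ⟨0, SetLike.one_mem_graded 𝒜⟩, by simp⟩
  | cons q t ih =>
    intro ht
    obtain ⟨U0, hU0u, hU0h, hU0⟩ := ih fun x hx => ht x (Multiset.mem_cons_of_mem hx)
    obtain ⟨u, huu, huh, hueq⟩ := ht q (Multiset.mem_cons_self q t)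
    refine ⟨u * U0, huu.mul hU0u, (hgood_R 𝒜).mul huh hU0h, ?_⟩
    rw [Multiset.prod_cons, hU0, hueq, Multiset.card_cons, pow_succ]
    ring

end Main
/-- Let `R` be an `A`-graded integral domain which is `A`-factorial, `s` a
nonzero non-invertible homogeneous element of degree `d`, and `n ≥ 2`.  Then
`R' = R[z]/(z^n - s)`, graded by `A' = (A ⊕ ℤ)/⟨(d, -n)⟩` so that elements of `R` keep
their degrees and `z` has degree `[(0,1)]`, is `A'`-factorial iff `s` is `A`-irreducible. -/
theorem stmt2 {A : Type*} [AddCommGroup A] [DecidableEq A]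
    {R : Type*} [CommRing R] [IsDomain R]
    (𝒜 : A → AddSubgroup R) [GradedRing 𝒜]
    (hfac : GradedFactorial 𝒜)
    (d : A) (s : R) (hs : s ∈ 𝒜 d) (hs0 : s ≠ 0) (hsu : ¬IsUnit s)
    (n : ℕ) (hn : 2 ≤ n) :
    GradedFactorial (rootGrading 𝒜 d s n) ↔ HIrreducible 𝒜 s := by
  classical
  have hn0 : 0 < n := by omega
  have hG' := hgood_R' 𝒜 d s n hs hn0 hs0 hsu
  constructor
  · -- R' graded factorial → s irreducible
    intro hfac'
    refine ⟨hs0, hsu, ⟨d, hs⟩, ?_⟩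
    intro b c hbh hch heq
    by_contra hcon
    push_neg at hcon
    obtain ⟨hbu, hcu⟩ := hcon
    have hb0 : b ≠ 0 := fun h => hs0 (by rw [heq, h, zero_mul])
    have hc0 : c ≠ 0 := fun h => hs0 (by rw [heq, h, mul_zero])
    obtain ⟨ab, hab⟩ := hbh
    obtain ⟨ac, hac⟩ := hch
    have hofb_h := homog_of' 𝒜 d s n hn0 hab
    have hofc_h := homog_of' 𝒜 d s n hn0 hac
    have hofb0 : of (X ^ n - C s) b ≠ 0 := of_ne_zero' s n hn0 hb0
    have hofc0 : of (X ^ n - C s) c ≠ 0 := of_ne_zero' s n hn0 hc0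
    have hofbu : ¬IsUnit (of (X ^ n - C s) b) := fun h => hbu (isUnit_of_iff s n hn0 h)
    have hofcu : ¬IsUnit (of (X ^ n - C s) c) := fun h => hcu (isUnit_of_iff s n hn0 h)
    obtain ⟨f, hfirr, hfprod⟩ := hfac'.1 _ hofb0 hofbu hofb_h
    obtain ⟨g, hgirr, hgprod⟩ := hfac'.1 _ hofc0 hofcu hofc_h
    have hzirr := hirr_z 𝒜 d s n hn hsu
    have hprodeq : (Multiset.replicate n (root (X ^ n - C s))).prod = (f + g).prod := by
      rw [Multiset.prod_replicate, root_pow_n', Multiset.prod_add, hfprod, hgprod,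
        ← map_mul, heq]
    have hrel := hfac'.2 _ _
      (fun x hx => by rw [Multiset.eq_of_mem_replicate hx]; exact hzirr)
      (fun x hx => by rcases Multiset.mem_add.1 hx with h | h
                      exacts [hfirr x h, hgirr x h])
      hprodeq
    rw [Multiset.rel_replicate_left] at hrel
    have hf0 : f ≠ 0 := by
      rintro rfl
      exact hofbu (by rw [← hfprod, Multiset.prod_zero]; exact isUnit_one)
    obtain ⟨q, hqf⟩ := Multiset.exists_mem_of_ne_zero hf0
    obtain ⟨u, huu, huh, hueq⟩ := hrel.2 q (Multiset.mem_add.2 (Or.inl hqf))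
    obtain ⟨au, iu, vu, hiu, hvu, rfl⟩ := (homog_iff 𝒜 d s n hn0 u).1 huh
    have hiu0 : iu = 0 := by
      by_contra hne
      exact root_isUnit_of_dvd_unit s n hn0 hsu hne huu
    subst hiu0
    rw [pow_zero, mul_one] at hueq huu
    have hbsplit : of (X ^ n - C s) b = q * (f.erase q).prod := by
      rw [Multiset.prod_erase hqf, hfprod]
    have hresth := hG'.prod_homog (f := f.erase q)
      (fun x hx => (hfirr x (Multiset.mem_of_mem_erase hx)).2.2.1)
    obtain ⟨ar, ir, rr, hir, hrr, hrE⟩ := (homog_iff 𝒜 d s n hn0 _).1 hresth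
    rw [hrE] at hbsplit
    have hcomp : of (X ^ n - C s) b
        = root (X ^ n - C s) * (of (X ^ n - C s) (vu * rr) * root (X ^ n - C s) ^ ir) := by
      rw [hbsplit, hueq, map_mul]; ring
    obtain ⟨hirn, hbeq⟩ := z_dvd_of s n hn0 hb0 hir hcomp
    have hkey : s * 1 = s * (vu * rr * c) := by
      conv_lhs => rw [mul_one, heq, hbeq]
      ring
    have h1 : (1 : R) = vu * rr * c := mul_left_cancel₀ hs0 hkey
    exact hcu (IsUnit.of_mul_eq_one (a := c) (vu * rr) (by rw [mul_comm]; exact h1.symm))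
  · -- s irreducible → R' graded factorial
    intro hsirr
    constructor
    · -- existence of factorizations
      intro x hx0 hxu hxh
      obtain ⟨a, i, r, hi, hr, rfl⟩ := (homog_iff 𝒜 d s n hn0 x).1 hxh
      have hr0 : r ≠ 0 := fun h => hx0 (by rw [h, map_zero, zero_mul])
      by_cases hru : IsUnit r
      · have hi0 : i ≠ 0 := by
          rintro rfl
          rw [pow_zero, mul_one] at hxu
          exact hxu ((of (X ^ n - C s)).isUnit_map hru)
        refine ⟨(of (X ^ n - C s) r * root (X ^ n - C s)) ::ₘ
          Multiset.replicate (i - 1) (root (X ^ n - C s)), ?_, ?_⟩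
        · intro b hb
          rcases Multiset.mem_cons.1 hb with rfl | hb2
          · exact hirr_unit_z 𝒜 d s n hn hsu hru hr
          · rw [Multiset.eq_of_mem_replicate hb2]
            exact hirr_z 𝒜 d s n hn hsu
        · have hzz : root (X ^ n - C s) * root (X ^ n - C s) ^ (i - 1)
              = root (X ^ n - C s) ^ i := by
            rw [← pow_succ']; congr 1; omega
          rw [Multiset.prod_cons, Multiset.prod_replicate, mul_assoc, hzz]
      · obtain ⟨f, hfirr, hfprod⟩ := hfac.1 r hr0 hru ⟨a, hr⟩
        set P : R → Prop := HAssociated 𝒜 s with hP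
        set k := Multiset.card (f.filter P) with hk
        obtain ⟨U, hUu, hUh, hU⟩ := prod_assoc_pow 𝒜 d s hs (f.filter P)
          (fun q hq => (Multiset.mem_filter.1 hq).2)
        set f₁ := f.filter (fun q => ¬ P q) with hf₁
        have hrdecomp : r = U * s ^ k * f₁.prod := by
          calc r = f.prod := hfprod.symm
          _ = (f.filter P).prod * f₁.prod := by
              rw [← Multiset.prod_add, Multiset.filter_add_not]
          _ = U * s ^ k * f₁.prod := by rw [hU]
        have hf₁irr : ∀ q ∈ f₁, HIrreducible 𝒜 q :=
          fun q hq => hfirr q (Multiset.mem_of_mem_filter hq)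
        have hf₁nas : ∀ q ∈ f₁, ¬ HAssociated 𝒜 s q :=
          fun q hq => (Multiset.mem_filter.1 hq).2
        have hx_eq : of (X ^ n - C s) r * root (X ^ n - C s) ^ i
            = of (X ^ n - C s) U * ((f₁.map (of (X ^ n - C s))).prod *
                root (X ^ n - C s) ^ (n * k + i)) := by
          have h1 : of (X ^ n - C s) r
              = of (X ^ n - C s) U * (of (X ^ n - C s) s) ^ k *
                of (X ^ n - C s) f₁.prod := by
            rw [hrdecomp, map_mul, map_mul, map_pow]
          rw [h1, ← root_pow_n', ← pow_mul, map_multiset_prod, pow_add]; ring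
        by_cases hm0 : n * k + i = 0
        · have hnk : n * k = 0 := by omega
          have hk0 : k = 0 := by
            rcases Nat.mul_eq_zero.1 hnk with h | h
            · omega
            · exact h
          have hi0 : i = 0 := by omega
          have hf₁0 : f₁ ≠ 0 := by
            intro h0
            apply hxu
            have hrU : r = U := by
              rw [hrdecomp, hk0, pow_zero, h0, Multiset.prod_zero, mul_one, mul_one]
            rw [hi0, pow_zero, mul_one, hrU]
            exact (of (X ^ n - C s)).isUnit_map hUu
          obtain ⟨q, hqf₁⟩ := Multiset.exists_mem_of_ne_zero hf₁0
          have hsplit : f₁ = q ::ₘ f₁.erase q := (Multiset.cons_erase hqf₁).symm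
          refine ⟨(of (X ^ n - C s) (U * q)) ::ₘ
            (f₁.erase q).map (of (X ^ n - C s)), ?_, ?_⟩
          · intro b hb
            rcases Multiset.mem_cons.1 hb with rfl | hb2
            · refine hirr_of 𝒜 d s n hn0 hs hsu
                ((hgood_R 𝒜).unit_mul_irred hUu hUh (hf₁irr q hqf₁)) ?_
              rintro ⟨w, hwu, hwh, hweq⟩
              obtain ⟨V, hUV, hVu, hVh⟩ := (hgood_R 𝒜).inv_isUnit hUu hUh
              refine hf₁nas q hqf₁ ⟨V * w, hVu.mul hwu, (hgood_R 𝒜).mul hVh hwh, ?_⟩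
              calc q = (V * U) * q := by rw [mul_comm V U, hUV, one_mul]
              _ = V * (U * q) := by ring
              _ = (V * w) * s := by rw [hweq]; ring
            · obtain ⟨q', hq', rfl⟩ := Multiset.mem_map.1 hb2
              exact hirr_of 𝒜 d s n hn0 hs hsu
                (hf₁irr q' (Multiset.mem_of_mem_erase hq'))
                (hf₁nas q' (Multiset.mem_of_mem_erase hq'))
          · rw [Multiset.prod_cons, ← map_multiset_prod, ← map_mul, hi0, pow_zero, mul_one]
            congr 1
            calc U * q * (f₁.erase q).prod = U * (q ::ₘ f₁.erase q).prod := by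
                  rw [Multiset.prod_cons]; ring
            _ = U * f₁.prod := by rw [← hsplit]
            _ = r := by rw [hrdecomp, hk0, pow_zero, mul_one]
        · refine ⟨(of (X ^ n - C s) U * root (X ^ n - C s)) ::ₘ
            (f₁.map (of (X ^ n - C s)) +
              Multiset.replicate (n * k + i - 1) (root (X ^ n - C s))), ?_, ?_⟩
          · intro b hb
            rcases Multiset.mem_cons.1 hb with rfl | hb2
            · obtain ⟨aU, haU⟩ := hUh
              exact hirr_unit_z 𝒜 d s n hn hsu hUu haU
            · rcases Multiset.mem_add.1 hb2 with hb3 | hb3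
              · obtain ⟨q', hq', rfl⟩ := Multiset.mem_map.1 hb3
                exact hirr_of 𝒜 d s n hn0 hs hsu (hf₁irr q' hq') (hf₁nas q' hq')
              · rw [Multiset.eq_of_mem_replicate hb3]
                exact hirr_z 𝒜 d s n hn hsu
          · rw [Multiset.prod_cons, Multiset.prod_add, Multiset.prod_replicate, hx_eq]
            have hzz : root (X ^ n - C s) * root (X ^ n - C s) ^ (n * k + i - 1)
                = root (X ^ n - C s) ^ (n * k + i) := by
              rw [← pow_succ']; congr 1; omega
            rw [← hzz]; ring
    · -- uniqueness of factorizations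
      intro f g hf hg hprod
      refine hG'.uniqueness ?_ f g hf hg hprod
      intro p hp
      obtain ⟨a, i, r, hi, hr, hform⟩ := (homog_iff 𝒜 d s n hn0 p).1 hp.2.2.1
      subst hform
      have hr0 : r ≠ 0 := fun h => hp.1 (by rw [h, map_zero, zero_mul])
      by_cases hi0 : i = 0
      · subst hi0
        rw [pow_zero, mul_one] at hp ⊢
        have hru : ¬IsUnit r := fun h => hp.2.1 ((of (X ^ n - C s)).isUnit_map h)
        obtain ⟨fr, hfrirr, hfrprod⟩ := hfac.1 r hr0 hru ⟨a, hr⟩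
        have hnoassoc : ∀ q ∈ fr, ¬ HAssociated 𝒜 s q := by
          rintro q hqf ⟨u, huu, huh, hueq⟩
          obtain ⟨au, hau⟩ := huh
          have hresth : SetLike.IsHomogeneousElem 𝒜 (fr.erase q).prod :=
            (hgood_R 𝒜).prod_homog
              (fun x hx => (hfrirr x (Multiset.mem_of_mem_erase hx)).2.2.1)
          obtain ⟨ar, har⟩ := hresth
          have hzz : root (X ^ n - C s) * root (X ^ n - C s) ^ (n - 1)
              = root (X ^ n - C s) ^ n := by
            rw [← pow_succ']; congr 1; omega
          have hsplit : of (X ^ n - C s) r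
              = (of (X ^ n - C s) u * root (X ^ n - C s)) *
                (of (X ^ n - C s) ((fr.erase q).prod) * root (X ^ n - C s) ^ (n - 1)) := by
            rw [← hfrprod, ← Multiset.prod_erase hqf, hueq, map_mul, map_mul,
              ← root_pow_n', ← hzz]
            ring
          have hhu : SetLike.IsHomogeneousElem (rootGrading 𝒜 d s n)
              (of (X ^ n - C s) u * root (X ^ n - C s)) := by
            have := homog_of_pow 𝒜 d s n hn0 (show 1 < n by omega) hau
            rwa [pow_one] at this
          rcases hp.2.2.2 _ _ hhu
            (homog_of_pow 𝒜 d s n hn0 (show n - 1 < n by omega) har) hsplit with h | h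
          · rw [show of (X ^ n - C s) u * root (X ^ n - C s)
                = of (X ^ n - C s) u * root (X ^ n - C s) ^ 1 by rw [pow_one]] at h
            exact root_isUnit_of_dvd_unit s n hn0 hsu one_ne_zero h
          · exact root_isUnit_of_dvd_unit s n hn0 hsu (show n - 1 ≠ 0 by omega) h
        have hfr0 : fr ≠ 0 := by
          rintro rfl
          rw [Multiset.prod_zero] at hfrprod
          exact hru (hfrprod ▸ isUnit_one)
        obtain ⟨q, hqf⟩ := Multiset.exists_mem_of_ne_zero hfr0
        have herase0 : fr.erase q = 0 := by
          by_contra hE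
          have hsplit : of (X ^ n - C s) r
              = of (X ^ n - C s) q * of (X ^ n - C s) ((fr.erase q).prod) := by
            rw [← map_mul, Multiset.prod_erase hqf, hfrprod]
          obtain ⟨aq, haq⟩ := (hfrirr q hqf).2.2.1
          have hrest_h : SetLike.IsHomogeneousElem 𝒜 (fr.erase q).prod :=
            (hgood_R 𝒜).prod_homog
              fun x hx => (hfrirr x (Multiset.mem_of_mem_erase hx)).2.2.1
          obtain ⟨ar2, har2⟩ := hrest_h
          rcases hp.2.2.2 _ _ (homog_of' 𝒜 d s n hn0 haq)
            (homog_of' 𝒜 d s n hn0 har2) hsplit with h | h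
          · exact (hfrirr q hqf).2.1 (isUnit_of_iff s n hn0 h)
          · exact hE (HGood.eq_zero_of_isUnit_prod
              (fun x hx => hfrirr x (Multiset.mem_of_mem_erase hx))
              (isUnit_of_iff s n hn0 h))
        have hrq : r = q := by
          have hfr_eq : fr = {q} := by
            rw [← Multiset.cons_erase hqf, herase0, Multiset.cons_zero]
          rw [← hfrprod, hfr_eq, Multiset.prod_singleton]
        rw [hrq]
        exact hprime_of 𝒜 d s n hn hs hs0 hsu hfac hsirr (hfrirr q hqf) (hnoassoc q hqf)
      · have hzz : root (X ^ n - C s) ^ (i - 1) * root (X ^ n - C s)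
            = root (X ^ n - C s) ^ i := by
          rw [← pow_succ]; congr 1; omega
        have hsplit : of (X ^ n - C s) r * root (X ^ n - C s) ^ i
            = (of (X ^ n - C s) r * root (X ^ n - C s) ^ (i - 1)) *
              root (X ^ n - C s) := by
          rw [← hzz]; ring
        rcases hp.2.2.2 _ _ (homog_of_pow 𝒜 d s n hn0 (show i - 1 < n by omega) hr)
          (hirr_z 𝒜 d s n hn hsu).2.2.1 hsplit with h | h
        · have hi1 : i = 1 := by
            by_contra hne
            exact root_isUnit_of_dvd_unit s n hn0 hsu (show i - 1 ≠ 0 by omega) h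
          have hru : IsUnit (of (X ^ n - C s) r) := by
            rw [hi1] at h
            simpa using h
          have hp2 : HPrime (rootGrading 𝒜 d s n)
              (of (X ^ n - C s) r * root (X ^ n - C s)) :=
            hG'.prime_unit_mul hru (homog_of' 𝒜 d s n hn0 hr)
              (hprime_z 𝒜 d s n hn hs hs0 hsu hfac hsirr)
          rw [hi1, pow_one]
          exact hp2
        · exfalso
          refine root_isUnit_of_dvd_unit s n hn0 hsu one_ne_zero
            (r := (1 : R)) ?_
          rw [map_one, one_mul, pow_one]
          exact h
end

section
/- Let A be a Noetherian integrally closed integral domain containing the field of rational numbers ℚ (e.g. an algebra over a field of characteristic 0), let p ∈ A be a prime element, and let n ≥ 1 be an integer. Then A' = A[z]/(z^n − p) is a Noetherian integrally closed integral domain. -/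
open Polynomial

theorem irr_f' {A : Type*} [CommRing A] [IsDomain A] {p : A} (hp : Prime p) {n : ℕ} (hn : 1 ≤ n) :
    Irreducible (X ^ n - C p) := by
  have hn0 : 0 < n := hn
  have hdeg : (X ^ n - C p).degree = (n : WithBot ℕ) := degree_X_pow_sub_C hn0 p
  apply Polynomial.irreducible_of_eisenstein_criterion (P := Ideal.span {p})
  · rwa [Ideal.span_singleton_prime hp.ne_zero]
  · rw [(monic_X_pow_sub_C p (by omega : n ≠ 0)).leadingCoeff, Ideal.mem_span_singleton]
    exact fun h => hp.not_unit (isUnit_of_dvd_one h)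
  · intro i hi
    rw [hdeg] at hi
    have hi' : i < n := by exact_mod_cast hi
    rw [coeff_sub, coeff_X_pow, if_neg hi'.ne, coeff_C]
    split_ifs with h
    · simpa using Ideal.mem_span_singleton_self p
    · simp
  · rw [hdeg]; exact_mod_cast hn0
  · rw [coeff_sub, coeff_X_pow, if_neg (by omega : 0 ≠ n), coeff_C, if_pos rfl,
      Ideal.span_singleton_pow, Ideal.mem_span_singleton, zero_sub, dvd_neg]
    rintro ⟨c, hc⟩
    apply hp.not_unit
    apply isUnit_of_dvd_one
    have h1 : p * 1 = p * (p * c) := by rw [mul_one, ← mul_assoc, ← sq]; exact hc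
    exact ⟨c, mul_left_cancel₀ hp.ne_zero h1⟩
  · exact (monic_X_pow_sub_C p (by omega : n ≠ 0)).isPrimitive

theorem eis_f {A : Type*} [CommRing A] [IsDomain A] {p : A} (hp : Prime p) {n : ℕ} (hn : 1 ≤ n) :
    (X ^ n - C p).IsEisensteinAt (Ideal.span {p}) := by
  constructor
  · rw [(monic_X_pow_sub_C p (by omega : n ≠ 0)).leadingCoeff, Ideal.mem_span_singleton]
    exact fun h => hp.not_unit (isUnit_of_dvd_one h)
  · intro i hi
    rw [natDegree_X_pow_sub_C] at hi
    rw [coeff_sub, coeff_X_pow, if_neg hi.ne, coeff_C]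
    split_ifs with h
    · simpa using Ideal.mem_span_singleton_self p
    · simp
  · rw [coeff_sub, coeff_X_pow, if_neg (by omega : 0 ≠ n), coeff_C, if_pos rfl,
      Ideal.span_singleton_pow, Ideal.mem_span_singleton, zero_sub, dvd_neg]
    rintro ⟨c, hc⟩
    apply hp.not_unit
    apply isUnit_of_dvd_one
    have h1 : p * 1 = p * (p * c) := by rw [mul_one, ← mul_assoc, ← sq]; exact hc
    exact ⟨c, mul_left_cancel₀ hp.ne_zero h1⟩

set_option maxHeartbeats 1000000 in
/-- Let `A` be a Noetherian integrally closed integral domain containing `ℚ`,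
`p ∈ A` a prime element and `n ≥ 1`.  Then `A' = A[z]/(z^n − p)` is a Noetherian
integrally closed integral domain. -/
theorem stmt4 {A : Type*} [CommRing A] [IsDomain A] [IsNoetherianRing A]
    [IsIntegrallyClosed A] [Algebra ℚ A] (p : A) (hp : Prime p) (n : ℕ) (hn : 1 ≤ n) :
    IsDomain (AdjoinRoot (Polynomial.X ^ n - Polynomial.C p)) ∧
    IsNoetherianRing (AdjoinRoot (Polynomial.X ^ n - Polynomial.C p)) ∧
    IsIntegrallyClosed (AdjoinRoot (Polynomial.X ^ n - Polynomial.C p)) := by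
  set f : A[X] := X ^ n - C p with hf
  have hm : f.Monic := monic_X_pow_sub_C p (by omega)
  have hndeg : f.natDegree = n := by
    rw [hf]; exact natDegree_X_pow_sub_C
  have hirrA : Irreducible f := irr_f' hp hn
  set K := FractionRing A
  have hirrK : Irreducible (f.map (algebraMap A K)) :=
    (hm.irreducible_iff_irreducible_map_fraction_map).mp hirrA
  set fK : K[X] := f.map (algebraMap A K) with hfK
  letI : Fact (Irreducible fK) := ⟨hirrK⟩
  set L := AdjoinRoot fK
  set θ : L := AdjoinRoot.root fK with hθdef
  haveI : IsScalarTower A K L := inferInstance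
  haveI : CharZero A := charZero_of_injective_algebraMap (algebraMap ℚ A).injective
  haveI : CharZero K := charZero_of_injective_algebraMap (IsFractionRing.injective A K)
  have hθK : Polynomial.aeval θ fK = 0 := by
    rw [Polynomial.aeval_def, AdjoinRoot.algebraMap_eq]
    exact AdjoinRoot.eval₂_root fK
  have hθ : Polynomial.aeval θ f = 0 := by
    rw [← Polynomial.aeval_map_algebraMap K θ f]; exact hθK
  have hθint : IsIntegral A θ := ⟨f, hm, by rwa [Polynomial.aeval_def] at hθ⟩
  have hminK : minpoly K θ = fK :=
    (minpoly.eq_of_irreducible_of_monic hirrK hθK (hm.map _)).symm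
  have hminA : minpoly A θ = f := by
    have h1 := minpoly.isIntegrallyClosed_eq_field_fractions' K hθint
    rw [hminK] at h1
    exact Polynomial.map_injective _ (IsFractionRing.injective A K) h1.symm
  -- the A-algebra morphism AdjoinRoot f →ₐ[A] L
  set ψ : AdjoinRoot f →ₐ[A] L := AdjoinRoot.liftAlgHom f (Algebra.ofId A L) θ hθ with hψdef
  have hψmk : ∀ q : A[X], ψ (AdjoinRoot.mk f q) = Polynomial.aeval θ q := fun q =>
    AdjoinRoot.liftAlgHom_mk f (Algebra.ofId A L) θ hθ q
  haveI : NoZeroSMulDivisors A L := ⟨fun {c x} h => by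
    rw [Algebra.smul_def, mul_eq_zero] at h
    refine h.imp_left fun hc => ?_
    rw [IsScalarTower.algebraMap_apply A K L] at hc
    exact IsFractionRing.injective A K (((algebraMap K L).injective
      (hc.trans (map_zero _).symm)).trans (map_zero _).symm)⟩
  have hψinj : Function.Injective ψ := by
    rw [injective_iff_map_eq_zero]
    intro x hx
    obtain ⟨q, rfl⟩ := AdjoinRoot.mk_surjective x
    rw [hψmk] at hx
    rw [AdjoinRoot.mk_eq_zero]
    exact hminA ▸ minpoly.isIntegrallyClosed_dvd hθint hx
  have hrange : ∀ x : L, x ∈ Algebra.adjoin A ({θ} : Set L) ↔ ∃ y, ψ y = x := by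
    intro x
    rw [Algebra.adjoin_singleton_eq_range_aeval]
    constructor
    · rintro ⟨q, rfl⟩
      exact ⟨AdjoinRoot.mk f q, hψmk q⟩
    · rintro ⟨y, rfl⟩
      obtain ⟨q, rfl⟩ := AdjoinRoot.mk_surjective y
      exact ⟨q, (hψmk q).symm⟩
  -- power basis
  set B : PowerBasis K L := AdjoinRoot.powerBasis hirrK.ne_zero with hB
  have hgen : B.gen = θ := AdjoinRoot.powerBasis_gen hirrK.ne_zero
  have hdim : B.dim = n := by
    rw [hB, AdjoinRoot.powerBasis_dim, hfK, hm.natDegree_map, hndeg]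
  haveI : FiniteDimensional K L := B.finite
  have hgenint : IsIntegral A B.gen := hgen ▸ hθint
  -- the discriminant
  have hfKeq : fK = X ^ n - C (algebraMap A K p) := by
    rw [hfK, hf]; simp [Polynomial.map_sub, Polynomial.map_pow]
  have hcoeff0 : fK.coeff 0 = algebraMap A K (-p) := by
    rw [hfKeq, coeff_sub, coeff_X_pow, if_neg (by omega : 0 ≠ n), coeff_C, if_pos rfl, map_neg]
    ring
  have hnormθ : Algebra.norm K θ = (-1) ^ n * algebraMap A K (-p) := by
    have := Algebra.PowerBasis.norm_gen_eq_coeff_zero_minpoly B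
    rw [hgen, hdim] at this
    rw [this, hminK, hcoeff0]
  have hderiv : derivative fK = C ((n : K)) * X ^ (n - 1) := by
    rw [hfKeq]; simp [derivative_X_pow]; exact (map_natCast C n).symm
  have hfinrank : Module.finrank K L = n := by rw [B.finrank, hdim]
  set d : A := (-1) ^ (n * (n - 1) / 2) * ((n : A) ^ n * ((-1) ^ n * (-p)) ^ (n - 1)) with hd
  have hdiscr : Algebra.discr K B.basis = algebraMap A K d := by
    rw [Algebra.discr_powerBasis_eq_norm, hgen, hminK, hderiv, hfinrank]
    rw [map_mul, Polynomial.aeval_C, map_pow, Polynomial.aeval_X]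
    rw [map_mul, map_pow, Algebra.norm_algebraMap, hnormθ, hfinrank, hd]
    push_cast [map_mul, map_pow, map_neg, map_one, map_natCast]
    ring
  have hu : IsUnit ((-1 : A) ^ (n * (n - 1) / 2) * ((n : A) ^ n * ((-1) ^ n * (-1)) ^ (n - 1))) := by
    have h1 : IsUnit (-1 : A) := isUnit_one.neg
    have h2 : IsUnit ((n : A)) := by
      have hnQ : ((n : ℚ)) ≠ 0 := Nat.cast_ne_zero.mpr (by omega)
      have := (isUnit_iff_ne_zero.mpr hnQ).map (algebraMap ℚ A)
      rwa [map_natCast] at this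
    exact ((h1.pow _).mul (((h2.pow _)).mul (((h1.pow _).mul h1).pow _)))
  have hdu : d = ((-1 : A) ^ (n * (n - 1) / 2) * ((n : A) ^ n * ((-1) ^ n * (-1)) ^ (n - 1))) * p ^ (n - 1) := by
    rw [hd]
    have : ((-1 : A) ^ n * (-p)) ^ (n-1) = ((-1 : A) ^ n * (-1)) ^ (n-1) * p ^ (n-1) := by
      rw [← mul_pow]; congr 1; ring
    rw [this]; ring
  -- key membership
  have hmem : ∀ x : L, IsIntegral A x → x ∈ Algebra.adjoin A ({B.gen} : Set L) := by
    intro x hx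
    have h1 := Algebra.discr_mul_isIntegral_mem_adjoin (R := A) K (B := B) hgenint hx
    rw [hdiscr, algebraMap_smul] at h1
    obtain ⟨v, hv⟩ := hu
    have h2 : (p ^ (n-1) : A) • x ∈ Algebra.adjoin A ({B.gen} : Set L) := by
      have h3 : (p ^ (n-1) : A) • x = (↑v⁻¹ : A) • (d • x) := by
        rw [smul_smul, hdu, ← hv, ← mul_assoc, Units.inv_mul, one_mul]
      rw [h3]
      exact Subalgebra.smul_mem _ h1 _
    refine mem_adjoin_of_smul_prime_pow_smul_of_minpoly_isEisensteinAt
      (K := K) hp hgenint hx h2 ?_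
    rw [hgen, hminA]
    exact eis_f hp hn
  -- assemble
  letI : Algebra (AdjoinRoot f) L := ψ.toRingHom.toAlgebra
  haveI : IsScalarTower A (AdjoinRoot f) L := IsScalarTower.of_algebraMap_eq fun a =>
    (ψ.commutes a).symm
  haveI : IsDomain (AdjoinRoot f) := Function.Injective.isDomain ψ.toRingHom hψinj
  haveI : Module.Finite A (AdjoinRoot f) := (AdjoinRoot.powerBasis' hm).finite
  haveI : Algebra.IsIntegral A (AdjoinRoot f) := Algebra.IsIntegral.of_finite A _
  haveI : IsIntegralClosure (AdjoinRoot f) A L := by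
    refine ⟨hψinj, fun {x} => ⟨fun hx => ?_, ?_⟩⟩
    · obtain ⟨y, hy⟩ := (hrange x).mp (hgen ▸ hmem x hx)
      exact ⟨y, hy⟩
    · rintro ⟨y, rfl⟩
      exact (Algebra.IsIntegral.isIntegral (R := A) y).map ψ
  haveI : IsFractionRing (AdjoinRoot f) L :=
    IsIntegralClosure.isFractionRing_of_finite_extension A K L (AdjoinRoot f)
  refine ⟨inferInstance, inferInstance, ?_⟩
  refine (isIntegrallyClosed_iff L).mpr fun {x} hx => ?_
  exact (IsIntegralClosure.isIntegral_iff (R := A) (A := AdjoinRoot f) (B := L)).mp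
    (isIntegral_trans (R := A) x hx)
end
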